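/- arXiv:1311.4216 — 9 statements merged into one kernel-verified Lean document; each statement's English description precedes it below -/
import Mathlib

section
/- Let χ be a Dirichlet character, and let p₁ < ... < pₙ be the first n primes with pₙ₊₁ the (n+1)-st prime. Then as s → ∞ (real s), ∏_{k=1}^n (1 - χ(p_k)/p_k^s) · ∑_{j=1}^∞ χ(j)/j^s − 1 = χ(pₙ₊₁)/pₙ₊₁^s + o(pₙ₊₁^{-s}). Equivalently, pₙ₊₁^s · (∏_{k=1}^n (1 - χ(p_k)/p_k^s) · L(s,χ) − 1) tends to χ(pₙ₊₁) as s → ∞. -/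
open Filter

namespace Stmt2Aux

noncomputable def f {k : ℕ} (χ : DirichletCharacter ℂ k) (s : ℝ) (j : ℕ) : ℂ :=
  χ (j : ZMod k) / (j : ℂ) ^ (s : ℂ)

noncomputable abbrev P (i : ℕ) : ℕ := Nat.nth Nat.Prime i

lemma P_prime (i : ℕ) : Nat.Prime (P i) := Nat.prime_nth_prime i

lemma P_lt_P {i j : ℕ} (h : i < j) : P i < P j :=
  (Nat.nth_lt_nth Nat.infinite_setOf_prime).mpr h

lemma cpow_nat_mul (s : ℝ) (a b : ℕ) :
    ((a * b : ℕ) : ℂ) ^ (s : ℂ) = (a : ℂ) ^ (s : ℂ) * (b : ℂ) ^ (s : ℂ) := by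
  have h : ((a : ℝ) * (b : ℝ)) ^ s = (a : ℝ) ^ s * (b : ℝ) ^ s :=
    Real.mul_rpow (by positivity) (by positivity)
  calc ((a * b : ℕ) : ℂ) ^ (s : ℂ) = ((((a : ℝ) * (b : ℝ)) : ℝ) : ℂ) ^ (s : ℂ) := by
        push_cast; ring_nf
    _ = ((((a : ℝ) * (b : ℝ)) ^ s : ℝ) : ℂ) := (Complex.ofReal_cpow (by positivity) s).symm
    _ = (((a : ℝ) ^ s * (b : ℝ) ^ s : ℝ) : ℂ) := by rw [h]
    _ = (a : ℂ) ^ (s : ℂ) * (b : ℂ) ^ (s : ℂ) := by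
        rw [Complex.ofReal_mul, Complex.ofReal_cpow (by positivity) s,
          Complex.ofReal_cpow (by positivity) s]
        push_cast; ring

lemma f_mul {k : ℕ} (χ : DirichletCharacter ℂ k) (s : ℝ) (a b : ℕ) :
    f χ s (a * b) = f χ s a * f χ s b := by
  unfold f
  rw [cpow_nat_mul, Nat.cast_mul, map_mul, div_mul_div_comm]

lemma norm_cpow (s : ℝ) (j : ℕ) : ‖(j : ℂ) ^ (s : ℂ)‖ = (j : ℝ) ^ s := by
  rw [← Complex.ofReal_natCast, ← Complex.ofReal_cpow (by positivity) s,
    Complex.norm_real, Real.norm_eq_abs, abs_of_nonneg (Real.rpow_nonneg (by positivity) s)]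

lemma norm_f_le {k : ℕ} (χ : DirichletCharacter ℂ k) (s : ℝ) (j : ℕ) :
    ‖f χ s j‖ ≤ ((j : ℝ) ^ s)⁻¹ := by
  unfold f
  rw [norm_div, norm_cpow, ← one_div]
  exact div_le_div_of_nonneg_right (χ.norm_le_one _) (Real.rpow_nonneg (by positivity) s)

lemma summable_of_bound {s : ℝ} (hs : 1 < s) {h : ℕ → ℂ}
    (hb : ∀ j, ‖h j‖ ≤ ((j : ℝ) ^ s)⁻¹) : Summable h :=
  Summable.of_norm_bounded (Real.summable_nat_rpow_inv.mpr hs) hb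

lemma summable_norm_of_bound {s : ℝ} (hs : 1 < s) {h : ℕ → ℂ}
    (hb : ∀ j, ‖h j‖ ≤ ((j : ℝ) ^ s)⁻¹) : Summable fun j => ‖h j‖ :=
  Summable.of_nonneg_of_le (fun _ => norm_nonneg _) hb (Real.summable_nat_rpow_inv.mpr hs)


lemma sieve {k : ℕ} (χ : DirichletCharacter ℂ k) {s : ℝ} (hs : 1 < s) (n : ℕ) :
    (∏ i ∈ Finset.range n, (1 - f χ s (P i))) * (∑' j : ℕ, f χ s j)
      = ∑' j : ℕ, if ∀ i < n, ¬ P i ∣ j then f χ s j else 0 := by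
  induction n with
  | zero => simp
  | succ n ih =>
    have hbnd : ∀ (c : ℕ → Prop) [DecidablePred c] (j : ℕ),
        ‖if c j then f χ s j else 0‖ ≤ ((j : ℝ) ^ s)⁻¹ := by
      intro c _ j
      split_ifs with h
      · exact norm_f_le χ s j
      · simp only [norm_zero]
        positivity
    set F : ℕ → ℂ := fun j => if P n ∣ j ∧ ∀ i < n, ¬ P i ∣ j then f χ s j else 0 with hF
    have hFsum : Summable F := summable_of_bound hs (hbnd _)
    have hGsum : Summable (fun j => if ∀ i < n, ¬ P i ∣ j then f χ s j else 0) :=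
      summable_of_bound hs (hbnd _)
    have hG'sum : Summable (fun j => if ∀ i < n + 1, ¬ P i ∣ j then f χ s j else 0) :=
      summable_of_bound hs (hbnd _)
    have hPn0 : (P n : ℕ) ≠ 0 := (P_prime n).ne_zero
    have claim1 : f χ s (P n) * ∑' j : ℕ, (if ∀ i < n, ¬ P i ∣ j then f χ s j else 0)
        = ∑' j : ℕ, F j := by
      rw [← tsum_mul_left]
      have hinj : Function.Injective (fun j : ℕ => P n * j) :=
        fun a b hab => Nat.eq_of_mul_eq_mul_left (Nat.pos_of_ne_zero hPn0) hab
      have hrange : Function.support F ⊆ Set.range (fun j : ℕ => P n * j) := by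
        intro x hx
        rw [Function.mem_support, hF] at hx
        by_cases hd : P n ∣ x ∧ ∀ i < n, ¬ P i ∣ x
        · obtain ⟨c, rfl⟩ := hd.1
          exact ⟨c, rfl⟩
        · simp [if_neg hd] at hx
      have := Function.Injective.tsum_eq hinj (f := F) hrange
      rw [← this]
      apply tsum_congr
      intro c
      show f χ s (P n) * _ = F (P n * c)
      by_cases hc : ∀ i < n, ¬ P i ∣ c
      · have hcond : P n ∣ P n * c ∧ ∀ i < n, ¬ P i ∣ P n * c := by
          refine ⟨Dvd.intro c rfl, fun i hi hdvd => ?_⟩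
          have hco : Nat.Coprime (P i) (P n) :=
            (Nat.coprime_primes (P_prime i) (P_prime n)).mpr (P_lt_P hi).ne
          exact hc i hi (hco.dvd_of_dvd_mul_left hdvd)
        rw [if_pos hc, hF]
        simp only [if_pos hcond]
        exact (f_mul χ s (P n) c).symm
      · have hcond : ¬ (P n ∣ P n * c ∧ ∀ i < n, ¬ P i ∣ P n * c) := by
          push_neg at hc ⊢
          intro _
          obtain ⟨i, hi, hdvd⟩ := hc
          exact ⟨i, hi, hdvd.mul_left _⟩
        rw [if_neg hc, hF]
        simp only [if_neg hcond, mul_zero]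
    rw [Finset.prod_range_succ, mul_comm (∏ i ∈ Finset.range n, (1 - f χ s (P i)))
      (1 - f χ s (P n)), mul_assoc, ih, sub_mul, one_mul, claim1, ← Summable.tsum_sub hGsum hFsum]
    apply tsum_congr
    intro j
    by_cases h1 : ∀ i < n, ¬ P i ∣ j
    · by_cases h2 : P n ∣ j
      · have : ¬ ∀ i < n + 1, ¬ P i ∣ j := by
          push_neg
          exact ⟨n, Nat.lt_succ_self n, h2⟩
        rw [if_neg this, if_pos h1, hF]
        simp [if_pos (⟨h2, h1⟩ : P n ∣ j ∧ ∀ i < n, ¬ P i ∣ j)]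
      · have : ∀ i < n + 1, ¬ P i ∣ j := by
          intro i hi
          rcases Nat.lt_succ_iff_lt_or_eq.mp hi with h | rfl
          · exact h1 i h
          · exact h2
        rw [if_pos this, if_pos h1, hF]
        have : ¬ (P n ∣ j ∧ ∀ i < n, ¬ P i ∣ j) := fun hh => h2 hh.1
        simp [if_neg this]
    · have h1' : ¬ ∀ i < n + 1, ¬ P i ∣ j := by
        push_neg at h1 ⊢
        obtain ⟨i, hi, hdvd⟩ := h1
        exact ⟨i, hi.trans (Nat.lt_succ_self n), hdvd⟩
      rw [if_neg h1, if_neg h1', hF]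
      have : ¬ (P n ∣ j ∧ ∀ i < n, ¬ P i ∣ j) := fun hh => h1 hh.2
      simp [if_neg this]


lemma cond_ge {n j : ℕ} (h2 : 2 ≤ j) (hc : ∀ i < n, ¬ P i ∣ j) : P n ≤ j := by
  by_contra hlt
  push_neg at hlt
  have hp : Nat.Prime j.minFac := Nat.minFac_prime (by omega)
  have hdvd : j.minFac ∣ j := Nat.minFac_dvd j
  have hle : j.minFac ≤ j := Nat.minFac_le (by omega)
  have hnth : Nat.nth Nat.Prime (Nat.count Nat.Prime j.minFac) = j.minFac := Nat.nth_count hp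
  have hi : Nat.count Nat.Prime j.minFac < n := by
    have h' : Nat.nth Nat.Prime (Nat.count Nat.Prime j.minFac) < Nat.nth Nat.Prime n := by
      rw [hnth]; exact lt_of_le_of_lt hle hlt
    exact (Nat.nth_lt_nth Nat.infinite_setOf_prime).mp h'
  refine hc _ hi ?_
  show Nat.nth Nat.Prime _ ∣ j
  rw [hnth]; exact hdvd

lemma chain {q j : ℕ} (hq : 1 ≤ q) (hj : q + 1 ≤ j) {s : ℝ} (hs2 : 2 ≤ s) :
    (q : ℝ) ^ s * ((j : ℝ) ^ s)⁻¹
      ≤ ((q : ℝ) / ((q : ℝ) + 1)) ^ (s - 2) * ((q : ℝ) ^ (2 : ℝ) * ((j : ℝ) ^ (2 : ℝ))⁻¹) := by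
  have hQ : (0 : ℝ) < q := by exact_mod_cast hq
  have hQJ : (q : ℝ) + 1 ≤ (j : ℝ) := by exact_mod_cast hj
  have hJ : (0 : ℝ) < j := by linarith
  have h1 : (q : ℝ) ^ s * ((j : ℝ) ^ s)⁻¹ = ((q : ℝ) / (j : ℝ)) ^ s := by
    rw [Real.div_rpow hQ.le hJ.le, div_eq_mul_inv]
  have h2 : ((q : ℝ) / (j : ℝ)) ^ s
      = ((q : ℝ) / (j : ℝ)) ^ (s - 2) * ((q : ℝ) / (j : ℝ)) ^ (2 : ℝ) := by
    rw [← Real.rpow_add (by positivity)]; norm_num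
  have h3 : ((q : ℝ) / (j : ℝ)) ^ (2 : ℝ) = (q : ℝ) ^ (2 : ℝ) * ((j : ℝ) ^ (2 : ℝ))⁻¹ := by
    rw [Real.div_rpow hQ.le hJ.le, div_eq_mul_inv]
  rw [h1, h2, h3]
  apply mul_le_mul_of_nonneg_right _ (by positivity)
  apply Real.rpow_le_rpow (by positivity) _ (by linarith)
  exact div_le_div_of_nonneg_left hQ.le (by linarith) hQJ

lemma f_one {k : ℕ} (χ : DirichletCharacter ℂ k) (s : ℝ) : f χ s 1 = 1 := by
  unfold f
  rw [Nat.cast_one, Nat.cast_one, map_one, Complex.one_cpow, div_one]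

lemma f_zero {k : ℕ} (χ : DirichletCharacter ℂ k) {s : ℝ} (hs : s ≠ 0) : f χ s 0 = 0 := by
  unfold f
  rw [Nat.cast_zero, Nat.cast_zero, Complex.zero_cpow (by exact_mod_cast hs), div_zero]


lemma key {k : ℕ} (χ : DirichletCharacter ℂ k) (n : ℕ) {s : ℝ} (hs2 : 2 ≤ s) :
    ‖(P n : ℂ) ^ (s : ℂ) *
        ((∏ i ∈ Finset.range n, (1 - f χ s (P i))) * (∑' j : ℕ, f χ s j) - 1)
      - χ ((P n : ℕ) : ZMod k)‖
      ≤ ((P n : ℝ) / ((P n : ℝ) + 1)) ^ (s - 2)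
          * ∑' j : ℕ, (P n : ℝ) ^ (2 : ℝ) * ((j : ℝ) ^ (2 : ℝ))⁻¹ := by
  have hs1 : (1 : ℝ) < s := by linarith
  have hs0 : s ≠ 0 := by linarith
  have hqp : Nat.Prime (P n) := P_prime n
  have hq2 : 2 ≤ P n := hqp.two_le
  rw [sieve χ hs1 n]
  set g : ℕ → ℂ := fun j => if ∀ i < n, ¬ P i ∣ j then f χ s j else 0 with hgdef
  have hbnd_g : ∀ j, ‖g j‖ ≤ ((j : ℝ) ^ s)⁻¹ := by
    intro j
    simp only [hgdef]
    split_ifs with h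
    · exact norm_f_le χ s j
    · simp only [norm_zero]; positivity
  have hgsum : Summable g := summable_of_bound hs1 hbnd_g
  have hg1 : g 1 = 1 := by
    simp only [hgdef]
    rw [if_pos, f_one]
    intro i _ hdvd
    exact (P_prime i).one_lt.ne' (Nat.dvd_one.mp hdvd)
  have hgq : g (P n) = f χ s (P n) := by
    simp only [hgdef]
    rw [if_pos]
    intro i hi hdvd
    exact absurd ((Nat.prime_dvd_prime_iff_eq (P_prime i) hqp).mp hdvd) (P_lt_P hi).ne
  set g1 : ℕ → ℂ := fun j => if j = 1 then 0 else g j with hg1def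
  have hbnd_g1 : ∀ j, ‖g1 j‖ ≤ ((j : ℝ) ^ s)⁻¹ := by
    intro j
    simp only [hg1def]
    split_ifs with h
    · simp only [norm_zero]; positivity
    · exact hbnd_g j
  have hg1sum : Summable g1 := summable_of_bound hs1 hbnd_g1
  set h : ℕ → ℂ := fun j => if j = P n then 0 else g1 j with hhdef
  have hbnd_h : ∀ j, ‖h j‖ ≤ ((j : ℝ) ^ s)⁻¹ := by
    intro j
    simp only [hhdef]
    split_ifs with hcase
    · simp only [norm_zero]; positivity
    · exact hbnd_g1 j
  have hhnormsum : Summable fun j => ‖h j‖ := summable_norm_of_bound hs1 hbnd_h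
  have e1 : ∑' j : ℕ, g j = 1 + (f χ s (P n) + ∑' j : ℕ, h j) := by
    rw [Summable.tsum_eq_add_tsum_ite hgsum 1, hg1]
    congr 1
    rw [Summable.tsum_eq_add_tsum_ite hg1sum (P n)]
    congr 1
    · show g1 (P n) = f χ s (P n)
      simp only [hg1def]
      rw [if_neg (by omega), hgq]
  rw [e1]
  have hqs_ne : ((P n : ℕ) : ℂ) ^ (s : ℂ) ≠ 0 := by
    intro hzero
    rcases (Complex.cpow_eq_zero_iff _ _).mp hzero with ⟨hb, -⟩
    exact_mod_cast absurd hb (by exact_mod_cast hqp.ne_zero)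
  have hfq : ((P n : ℕ) : ℂ) ^ (s : ℂ) * f χ s (P n) = χ ((P n : ℕ) : ZMod k) := by
    unfold f
    rw [mul_comm, div_mul_cancel₀ _ hqs_ne]
  have e2 : (P n : ℂ) ^ (s : ℂ) * (1 + (f χ s (P n) + ∑' j : ℕ, h j) - 1)
      - χ ((P n : ℕ) : ZMod k) = (P n : ℂ) ^ (s : ℂ) * ∑' j : ℕ, h j := by
    have : (1 : ℂ) + (f χ s (P n) + ∑' j : ℕ, h j) - 1 = f χ s (P n) + ∑' j : ℕ, h j := by
      ring
    rw [this, mul_add, hfq]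
    ring
  rw [e2, norm_mul, norm_cpow]
  calc (P n : ℝ) ^ s * ‖∑' j : ℕ, h j‖
      ≤ (P n : ℝ) ^ s * ∑' j : ℕ, ‖h j‖ :=
        mul_le_mul_of_nonneg_left (norm_tsum_le_tsum_norm hhnormsum)
          (Real.rpow_nonneg (by positivity) s)
    _ = ∑' j : ℕ, (P n : ℝ) ^ s * ‖h j‖ := tsum_mul_left.symm
    _ ≤ ∑' j : ℕ, ((P n : ℝ) / ((P n : ℝ) + 1)) ^ (s - 2)
          * ((P n : ℝ) ^ (2 : ℝ) * ((j : ℝ) ^ (2 : ℝ))⁻¹) := by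
        apply Summable.tsum_le_tsum _ (hhnormsum.mul_left _)
          ((((Real.summable_nat_rpow_inv.mpr (by norm_num : (1:ℝ) < 2)).mul_left
            ((P n : ℝ) ^ (2 : ℝ))).mul_left _))
        intro j
        by_cases hj0 : h j = 0
        · rw [hj0, norm_zero, mul_zero]
          positivity
        · have hjq : j ≠ P n := by
            intro hh; apply hj0; simp [hhdef, hh]
          have hj1 : j ≠ 1 := by
            intro hh; apply hj0; simp [hhdef, hg1def, hh, hjq]
          have hgj : g j ≠ 0 := by
            intro hh; apply hj0; simp [hhdef, hg1def, hjq, hj1, hh]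
          have hcond : ∀ i < n, ¬ P i ∣ j := by
            by_contra hcc
            apply hgj
            simp [hgdef, if_neg hcc]
          have hfj : f χ s j ≠ 0 := by
            intro hh; apply hgj; simp [hgdef, hcond, hh]
          have hj0' : j ≠ 0 := by
            intro hh; exact hfj (hh ▸ f_zero χ hs0)
          have hj2 : 2 ≤ j := by omega
          have hge : P n ≤ j := cond_ge hj2 hcond
          have hgt : P n + 1 ≤ j := by omega
          have hh_eq : ‖h j‖ ≤ ((j : ℝ) ^ s)⁻¹ := hbnd_h j
          calc (P n : ℝ) ^ s * ‖h j‖ ≤ (P n : ℝ) ^ s * ((j : ℝ) ^ s)⁻¹ :=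
                mul_le_mul_of_nonneg_left hh_eq (Real.rpow_nonneg (by positivity) s)
            _ ≤ _ := chain (by omega) hgt hs2
    _ = ((P n : ℝ) / ((P n : ℝ) + 1)) ^ (s - 2)
          * ∑' j : ℕ, (P n : ℝ) ^ (2 : ℝ) * ((j : ℝ) ^ (2 : ℝ))⁻¹ := tsum_mul_left


end Stmt2Aux

/-- As real s → ∞, pₙ₊₁^s · (∏_{k=1}^n (1 - χ(p_k)/p_k^s) · L(s,χ) − 1) → χ(pₙ₊₁). -/
theorem stmt_2 (k : ℕ) (χ : DirichletCharacter ℂ k) (n : ℕ) :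
    Tendsto (fun s : ℝ =>
      ((Nat.nth Nat.Prime n : ℕ) : ℂ) ^ (s : ℂ) *
        ((∏ i ∈ Finset.range n,
            (1 - χ ((Nat.nth Nat.Prime i : ℕ) : ZMod k) /
              (Nat.nth Nat.Prime i : ℂ) ^ (s : ℂ))) *
          (∑' j : ℕ, χ (j : ZMod k) / (j : ℂ) ^ (s : ℂ)) - 1))
      atTop (nhds (χ ((Nat.nth Nat.Prime n : ℕ) : ZMod k))) := by
  set C : ℝ := ∑' j : ℕ, (Nat.nth Nat.Prime n : ℝ) ^ (2 : ℝ) * ((j : ℝ) ^ (2 : ℝ))⁻¹ with hC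
  rw [← tendsto_sub_nhds_zero_iff]
  apply squeeze_zero_norm' (a := fun s : ℝ =>
    ((Nat.nth Nat.Prime n : ℝ) / ((Nat.nth Nat.Prime n : ℝ) + 1)) ^ (s - 2) * C)
  · filter_upwards [eventually_ge_atTop (2 : ℝ)] with s hs2
    exact Stmt2Aux.key χ n hs2
  · have hr1 : (Nat.nth Nat.Prime n : ℝ) / ((Nat.nth Nat.Prime n : ℝ) + 1) < 1 := by
      rw [div_lt_one (by positivity)]
      linarith [show (0 : ℝ) ≤ (Nat.nth Nat.Prime n : ℝ) from by positivity]
    have hr0 : (0 : ℝ) ≤ (Nat.nth Nat.Prime n : ℝ) / ((Nat.nth Nat.Prime n : ℝ) + 1) := by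
      positivity
    have h0 := (tendsto_rpow_atTop_of_base_lt_one _ (by linarith) hr1).comp
      (tendsto_atTop_add_const_right atTop (-2 : ℝ) tendsto_id)
    have h1 := h0.mul_const C
    simpa [Function.comp, sub_eq_add_neg] using h1
end

section
/- Let χ be a Dirichlet character modulo k, let p₁ < ... < pₙ be the first n primes, and suppose the (n+1)-st prime pₙ₊₁ does not divide k. Then pₙ₊₁ = lim_{s→∞} |∑_{j=1}^∞ χ(j)/j^s − ∏_{k=1}^n (1 - χ(p_k)/p_k^s)^{-1}|^{-1/s}, where s ranges over real numbers. -/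
open Filter Complex Topology


private lemma aux_prod_eq (g : ℕ → ℂ) (n : ℕ) :
    ∏ i ∈ Finset.range n, g (Nat.nth Nat.Prime i) =
      ∏ q ∈ (Nat.nth Nat.Prime n).primesBelow, g q := by
  refine Finset.prod_nbij (fun i => Nat.nth Nat.Prime i) ?_ ?_ ?_ (fun _ _ => rfl)
  · intro i hi
    rw [Finset.mem_range] at hi
    exact Nat.mem_primesBelow.mpr
      ⟨(Nat.nth_lt_nth Nat.infinite_setOf_prime).mpr hi, Nat.prime_nth_prime i⟩
  · intro a _ b _ h
    exact Nat.nth_injective Nat.infinite_setOf_prime h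
  · intro q hq
    rw [Finset.mem_coe, Nat.mem_primesBelow] at hq
    refine ⟨Nat.count Nat.Prime q, ?_, Nat.nth_count hq.2⟩
    rw [Finset.mem_coe, Finset.mem_range]
    have h2 := hq.1
    rw [← Nat.nth_count hq.2] at h2
    exact (Nat.nth_lt_nth Nat.infinite_setOf_prime).mp h2

private lemma aux_key (k : ℕ) (χ : DirichletCharacter ℂ k) (n : ℕ) {s : ℝ} (hs : 2 ≤ s) :
    ‖((∑' j : ℕ, χ (j : ZMod k) / (j : ℂ) ^ (s : ℂ)) -
        ∏ i ∈ Finset.range n,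
          (1 - χ ((Nat.nth Nat.Prime i : ℕ) : ZMod k) /
            (Nat.nth Nat.Prime i : ℂ) ^ (s : ℂ))⁻¹)
      - χ ((Nat.nth Nat.Prime n : ℕ) : ZMod k) * (Nat.nth Nat.Prime n : ℂ) ^ (-(s : ℂ))‖
      ≤ ((Nat.nth Nat.Prime n : ℝ) + 1) ^ (2 - s) * ∑' m : ℕ, (m : ℝ) ^ (-2 : ℝ) := by
  set p := Nat.nth Nat.Prime n with hp
  have hppr : p.Prime := Nat.prime_nth_prime n
  have hs1 : 1 < (s : ℂ).re := by simpa using by linarith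
  have hs0 : (s : ℂ) ≠ 0 := ne_zero_of_one_lt_re hs1
  set f := dirichletSummandHom χ hs0 with hf
  have hfval : ∀ m : ℕ, f m = χ (m : ZMod k) * (m : ℂ) ^ (-(s : ℂ)) := fun m => rfl
  have hnorm : Summable fun m => ‖f m‖ := summable_dirichletSummand χ hs1
  have hsum : Summable fun m => f m := hnorm.of_norm
  -- rewrite the tsum
  have eq1 : (∑' j : ℕ, χ (j : ZMod k) / (j : ℂ) ^ (s : ℂ)) = ∑' j : ℕ, f j := by
    refine tsum_congr fun j => ?_
    rw [hfval, cpow_neg, div_eq_mul_inv]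
  -- rewrite the product
  have eq2 : (∏ i ∈ Finset.range n,
      (1 - χ ((Nat.nth Nat.Prime i : ℕ) : ZMod k) / (Nat.nth Nat.Prime i : ℂ) ^ (s : ℂ))⁻¹)
      = ∑' m : p.smoothNumbers, f m := by
    rw [aux_prod_eq (fun q => (1 - χ (q : ZMod k) / (q : ℂ) ^ (s : ℂ))⁻¹) n]
    have h := EulerProduct.prod_primesBelow_geometric_eq_tsum_smoothNumbers
      (f := (dirichletSummandHom χ hs0).toMonoidHom) hsum p
    refine Eq.trans ?_ h
    refine Finset.prod_congr rfl fun q _ => ?_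
    congr 1
    congr 1
    rw [show ((dirichletSummandHom χ hs0).toMonoidHom q) = f q from rfl, hfval, cpow_neg,
      div_eq_mul_inv]
  rw [eq1, eq2]
  -- the difference is the sum over non-smooth numbers
  have split := hsum.tsum_subtype_add_tsum_subtype_compl p.smoothNumbers
  have eq3 : (∑' j : ℕ, f j) - (∑' m : p.smoothNumbers, f m)
      = ∑' m : ℕ, (p.smoothNumbersᶜ).indicator f m := by
    rw [← tsum_subtype, ← split]; ring
  rw [eq3]
  have hpc : p ∈ p.smoothNumbersᶜ := by
    intro hmem
    rw [Nat.mem_smoothNumbers'] at hmem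
    exact lt_irrefl p (hmem p hppr dvd_rfl)
  have hindsum : Summable fun m => (p.smoothNumbersᶜ).indicator f m := hsum.indicator _
  rw [Summable.tsum_eq_add_tsum_ite hindsum p, Set.indicator_of_mem hpc, hfval]
  rw [add_sub_cancel_left]
  -- now bound the remaining sum
  set G : ℕ → ℝ := fun m => ((p : ℝ) + 1) ^ (2 - s) * (m : ℝ) ^ (-2 : ℝ) with hG
  have hGsum : Summable G := (Real.summable_nat_rpow.mpr (by norm_num)).mul_left _
  have hgle : ∀ m : ℕ, ‖if m = p then 0 else (p.smoothNumbersᶜ).indicator f m‖ ≤ G m := by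
    intro m
    have hGnonneg : 0 ≤ G m := by
      apply mul_nonneg (Real.rpow_nonneg (by positivity) _) (Real.rpow_nonneg (by positivity) _)
    by_cases hmp : m = p
    · simpa [hmp] using hGnonneg
    rw [if_neg hmp]
    by_cases hmem : m ∈ p.smoothNumbersᶜ
    · rw [Set.indicator_of_mem hmem]
      rcases Nat.eq_zero_or_pos m with rfl | hm0
      · simpa using hGnonneg
      -- m has a prime factor ≥ p, so m ≥ p + 1
      have hmge : p + 1 ≤ m := by
        rw [Set.mem_compl_iff, Nat.mem_smoothNumbers'] at hmem
        push_neg at hmem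
        obtain ⟨q, hq, hqdvd, hqge⟩ := hmem
        have : p ≤ m := hqge.trans (Nat.le_of_dvd hm0 hqdvd)
        omega
      have hmger : (p : ℝ) + 1 ≤ (m : ℝ) := by exact_mod_cast hmge
      have hnormf : ‖f m‖ ≤ (m : ℝ) ^ (-s) := by
        rw [hfval, norm_mul]
        have h1 : ‖(m : ℂ) ^ (-(s : ℂ))‖ = (m : ℝ) ^ (-s) := by
          rw [show ((m : ℕ) : ℂ) = ((m : ℝ) : ℂ) by push_cast; ring,
            Complex.norm_cpow_eq_rpow_re_of_pos (by positivity)]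
          simp
        rw [h1]
        exact mul_le_of_le_one_left (Real.rpow_nonneg (by positivity) _) (χ.norm_le_one _)
      refine hnormf.trans ?_
      have hmpos : (0 : ℝ) < (m : ℝ) := by positivity
      have hsplit : (m : ℝ) ^ (-s) = (m : ℝ) ^ (2 - s) * (m : ℝ) ^ (-2 : ℝ) := by
        rw [← Real.rpow_add hmpos]; ring_nf
      rw [hsplit, hG]
      apply mul_le_mul_of_nonneg_right _ (Real.rpow_nonneg hmpos.le _)
      exact Real.rpow_le_rpow_of_nonpos (by positivity) hmger (by linarith)
    · rw [Set.indicator_of_notMem hmem]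
      simpa using hGnonneg
  calc ‖∑' m : ℕ, if m = p then 0 else (p.smoothNumbersᶜ).indicator f m‖
      ≤ ∑' m : ℕ, ‖if m = p then 0 else (p.smoothNumbersᶜ).indicator f m‖ := by
        apply norm_tsum_le_tsum_norm
        refine hnorm.of_nonneg_of_le (fun m => norm_nonneg _) fun m => ?_
        by_cases hmp : m = p
        · simp [hmp]
        · rw [if_neg hmp]
          exact norm_indicator_le_norm_self (⇑f) m
    _ ≤ ∑' m : ℕ, G m := by
        apply Summable.tsum_le_tsum hgle _ hGsum
        refine hnorm.of_nonneg_of_le (fun m => norm_nonneg _) fun m => ?_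
        by_cases hmp : m = p
        · simp [hmp]
        · rw [if_neg hmp]
          exact norm_indicator_le_norm_self (⇑f) m
    _ = ((p : ℝ) + 1) ^ (2 - s) * ∑' m : ℕ, (m : ℝ) ^ (-2 : ℝ) := by
        rw [hG, tsum_mul_left]

/-- pₙ₊₁ = lim_{s→∞} |∑_{j=1}^∞ χ(j)/j^s − ∏_{k=1}^n (1 - χ(p_k)/p_k^s)⁻¹|^{-1/s},
provided pₙ₊₁ does not divide the modulus k. -/
theorem stmt_3 (k : ℕ) (χ : DirichletCharacter ℂ k) (n : ℕ)
    (hdvd : ¬ Nat.nth Nat.Prime n ∣ k) :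
    Tendsto (fun s : ℝ =>
      ‖((∑' j : ℕ, χ (j : ZMod k) / (j : ℂ) ^ (s : ℂ)) -
        ∏ i ∈ Finset.range n,
          (1 - χ ((Nat.nth Nat.Prime i : ℕ) : ZMod k) /
            (Nat.nth Nat.Prime i : ℂ) ^ (s : ℂ))⁻¹)‖ ^ (-1 / s))
      atTop (nhds (Nat.nth Nat.Prime n : ℝ)) := by
  set p := Nat.nth Nat.Prime n with hp
  have hppr : p.Prime := Nat.prime_nth_prime n
  set P : ℝ := (p : ℝ) with hP
  have hP2 : (2 : ℝ) ≤ P := by rw [hP]; exact_mod_cast hppr.two_le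
  have hP0 : (0 : ℝ) < P := by linarith
  set B : ℝ := ∑' m : ℕ, (m : ℝ) ^ (-2 : ℝ) with hB
  have hB0 : 0 ≤ B :=
    tsum_nonneg fun m => Real.rpow_nonneg (by positivity) _
  -- the function whose limit we take
  set D : ℝ → ℂ := fun s => ((∑' j : ℕ, χ (j : ZMod k) / (j : ℂ) ^ (s : ℂ)) -
        ∏ i ∈ Finset.range n,
          (1 - χ ((Nat.nth Nat.Prime i : ℕ) : ZMod k) /
            (Nat.nth Nat.Prime i : ℂ) ^ (s : ℂ))⁻¹) with hD
  -- norm of the main term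
  have hu : IsUnit ((p : ℕ) : ZMod k) := (ZMod.isUnit_prime_iff_not_dvd hppr).mpr hdvd
  have hmain : ∀ s : ℝ, ‖χ ((p : ℕ) : ZMod k) * (p : ℂ) ^ (-(s : ℂ))‖ = P ^ (-s) := by
    intro s
    rw [norm_mul]
    have h1 : ‖χ ((p : ℕ) : ZMod k)‖ = 1 := by
      rw [← hu.unit_spec]
      exact χ.unit_norm_eq_one hu.unit
    have h2 : ‖(p : ℂ) ^ (-(s : ℂ))‖ = P ^ (-s) := by
      rw [show ((p : ℕ) : ℂ) = ((P : ℝ) : ℂ) from (Complex.ofReal_natCast p).symm,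
        Complex.norm_cpow_eq_rpow_re_of_pos hP0]
      simp
    rw [h1, h2, one_mul]
  -- eventual bound : the error term is at most (1/2) P^(-s)
  have hsmall : ∀ᶠ s : ℝ in atTop, ((P : ℝ) + 1) ^ (2 - s) * B ≤ 1 / 2 * P ^ (-s) := by
    have hbase : Tendsto (fun s : ℝ => (P / (P + 1)) ^ s * ((P + 1) ^ (2 : ℝ) * B)) atTop
        (𝓝 0) := by
      have hb1 : (0:ℝ) < P / (P + 1) := by positivity
      have h0 := tendsto_rpow_atTop_of_base_lt_one (P / (P + 1))
        (by linarith) (by rw [div_lt_one (by linarith)]; linarith)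
      simpa using h0.mul_const ((P + 1) ^ (2 : ℝ) * B)
    filter_upwards [hbase.eventually (gt_mem_nhds (by norm_num : (0:ℝ) < 1/2)),
      eventually_ge_atTop (2 : ℝ)] with s hs hs2
    have heq : ((P : ℝ) + 1) ^ (2 - s) * B
        = ((P / (P + 1)) ^ s * ((P + 1) ^ (2 : ℝ) * B)) * P ^ (-s) := by
      rw [Real.div_rpow hP0.le (by linarith), Real.rpow_neg hP0.le,
        show (2 : ℝ) - s = 2 + (-s) by ring, Real.rpow_add (by linarith : (0:ℝ) < P + 1),
        Real.rpow_neg (by linarith : (0:ℝ) ≤ P + 1)]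
      have hPs : (0 : ℝ) < P ^ s := Real.rpow_pos_of_pos hP0 s
      have hP1s : (0 : ℝ) < (P + 1) ^ s := Real.rpow_pos_of_pos (by linarith) s
      field_simp
    rw [heq]
    have hPs : (0 : ℝ) ≤ P ^ (-s) := Real.rpow_nonneg hP0.le _
    exact mul_le_mul_of_nonneg_right hs.le hPs
  -- eventual sandwich for the norm
  have hsandwich : ∀ᶠ s : ℝ in atTop,
      1 / 2 * P ^ (-s) ≤ ‖D s‖ ∧ ‖D s‖ ≤ 2 * P ^ (-s) := by
    filter_upwards [hsmall, eventually_ge_atTop (2 : ℝ)] with s hs hs2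
    have hkey : ‖D s - χ ((p : ℕ) : ZMod k) * (p : ℂ) ^ (-(s : ℂ))‖ ≤ (P + 1) ^ (2 - s) * B :=
      aux_key k χ n hs2
    have hkey2 : ‖D s - χ ((p : ℕ) : ZMod k) * (p : ℂ) ^ (-(s : ℂ))‖ ≤ 1 / 2 * P ^ (-s) :=
      hkey.trans hs
    set a : ℂ := χ ((p : ℕ) : ZMod k) * (p : ℂ) ^ (-(s : ℂ)) with ha'
    have ha : ‖a‖ ≤ ‖D s‖ + ‖D s - a‖ := by
      calc ‖a‖ = ‖D s - (D s - a)‖ := by rw [sub_sub_cancel]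
        _ ≤ ‖D s‖ + ‖D s - a‖ := norm_sub_le _ _
    have hb : ‖D s‖ ≤ ‖D s - a‖ + ‖a‖ := by
      calc ‖D s‖ = ‖(D s - a) + a‖ := by rw [sub_add_cancel]
        _ ≤ ‖D s - a‖ + ‖a‖ := norm_add_le _ _
    have hna : ‖a‖ = P ^ (-s) := hmain s
    constructor <;> linarith
  -- rpow bounds
  have hbound : ∀ᶠ s : ℝ in atTop,
      (2 : ℝ) ^ (-1 / s) * P ≤ ‖D s‖ ^ (-1 / s) ∧
        ‖D s‖ ^ (-1 / s) ≤ (2 : ℝ) ^ (1 / s) * P := by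
    filter_upwards [hsandwich, eventually_ge_atTop (2 : ℝ)] with s hsand hs2
    obtain ⟨hlo, hhi⟩ := hsand
    have hs0 : s ≠ 0 := by linarith
    have ht : -1 / s ≤ 0 := by
      apply div_nonpos_of_nonpos_of_nonneg <;> linarith
    have hPneg : (0 : ℝ) < P ^ (-s) := Real.rpow_pos_of_pos hP0 _
    have hDpos : (0 : ℝ) < ‖D s‖ := lt_of_lt_of_le (by positivity) hlo
    have hPP : (P ^ (-s) : ℝ) ^ (-1 / s) = P := by
      rw [← Real.rpow_mul hP0.le, show -s * (-1 / s) = 1 by field_simp, Real.rpow_one]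
    constructor
    · have h1 : ‖D s‖ ≤ 2 * P ^ (-s) := hhi
      have h2 := Real.rpow_le_rpow_of_nonpos hDpos h1 ht
      rwa [Real.mul_rpow (by norm_num) hPneg.le, hPP] at h2
    · have h2 := Real.rpow_le_rpow_of_nonpos (by positivity) hlo ht
      rwa [Real.mul_rpow (by norm_num) hPneg.le, hPP,
        show ((1:ℝ)/2) ^ (-1/s) = (2:ℝ) ^ (1/s) by
          rw [one_div, ← Real.rpow_neg_one (2:ℝ), ← Real.rpow_mul (by norm_num : (0:ℝ) ≤ 2)]
          congr 1
          field_simp] at h2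
  -- limits of the two bounding functions
  have hexp : Tendsto (fun s : ℝ => 1 / s) atTop (𝓝 0) := by
    simpa using tendsto_inv_atTop_zero
  have hexp' : Tendsto (fun s : ℝ => -1 / s) atTop (𝓝 0) := by
    have := hexp.neg
    simpa [neg_div] using this
  have hL : Tendsto (fun s : ℝ => (2 : ℝ) ^ (-1 / s) * P) atTop (𝓝 P) := by
    have h := (Real.continuousAt_const_rpow (a := (2:ℝ)) (b := 0) two_ne_zero).tendsto.comp hexp'
    simpa using h.mul_const P
  have hU : Tendsto (fun s : ℝ => (2 : ℝ) ^ (1 / s) * P) atTop (𝓝 P) := by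
    have h := (Real.continuousAt_const_rpow (a := (2:ℝ)) (b := 0) two_ne_zero).tendsto.comp hexp
    simpa using h.mul_const P
  exact tendsto_of_tendsto_of_tendsto_of_le_of_le' hL hU
    (hbound.mono fun s hs => hs.1) (hbound.mono fun s hs => hs.2)
end

section
/- Let χ be a Dirichlet character modulo k, let p₁ < ... < pₙ be the first n primes (n ≥ 1), and suppose the (n+1)-st prime pₙ₊₁ does not divide k. Then pₙ₊₁ = lim_{s→∞} |∑_{j=1}^{2pₙ−1} χ(j)/j^s − ∏_{k=1}^n (1 − χ(p_k)/p_k^s)^{−1}|^{−1/s}, where s ranges over real numbers tending to infinity. -/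
open Filter Finset

namespace Stmt4Aux

noncomputable def termHom (k : ℕ) (χ : DirichletCharacter ℂ k) (s : ℝ) : ℕ →* ℂ where
  toFun m := χ (m : ZMod k) / (m : ℂ) ^ (s : ℂ)
  map_one' := by simp
  map_mul' a b := by
    simp only [Nat.cast_mul]
    rw [map_mul, ← Complex.ofReal_natCast a, ← Complex.ofReal_natCast b,
      Complex.mul_cpow_ofReal_nonneg (by positivity) (by positivity)]
    push_cast
    ring

lemma termHom_apply (k : ℕ) (χ : DirichletCharacter ℂ k) (s : ℝ) (m : ℕ) :
    termHom k χ s m = χ (m : ZMod k) / (m : ℂ) ^ (s : ℂ) := rfl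

/-- product of the first primes indexed by a finset -/
noncomputable def dd (A : Finset ℕ) : ℕ := ∏ i ∈ A, Nat.nth Nat.Prime i

def idx (n N : ℕ) : Finset (ℕ × Finset ℕ) := (Finset.Icc 1 N) ×ˢ (Finset.range n).powerset

noncomputable def vv (pr : ℕ × Finset ℕ) : ℕ := pr.1 * dd pr.2

noncomputable def eps (A : Finset ℕ) : ℂ := (-1) ^ A.card

lemma key_identity (k : ℕ) (χ : DirichletCharacter ℂ k) (s : ℝ) (n N : ℕ) :
    (∑ j ∈ Finset.Icc 1 N, termHom k χ s j) *
      (∏ i ∈ Finset.range n, (1 - termHom k χ s (Nat.nth Nat.Prime i))) =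
    ∑ pr ∈ idx n N, eps pr.2 * termHom k χ s (vv pr) := by
  have hW : (∏ i ∈ Finset.range n, (1 - termHom k χ s (Nat.nth Nat.Prime i))) =
      ∑ A ∈ (Finset.range n).powerset, eps A * termHom k χ s (dd A) := by
    have h1 : ∀ i ∈ Finset.range n, (1 - termHom k χ s (Nat.nth Nat.Prime i)) =
        (-(termHom k χ s (Nat.nth Nat.Prime i)) + 1) := fun i _ => by ring
    rw [Finset.prod_congr rfl h1, Finset.prod_add]
    refine Finset.sum_congr rfl fun A hA => ?_
    rw [Finset.prod_const_one, mul_one]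
    have h2 : ∀ i ∈ A, -(termHom k χ s (Nat.nth Nat.Prime i)) =
        (-1) * termHom k χ s (Nat.nth Nat.Prime i) := fun i _ => by ring
    rw [Finset.prod_congr rfl h2, Finset.prod_mul_distrib, Finset.prod_const, eps, dd, map_prod]
  rw [hW, Finset.sum_mul_sum, idx, Finset.sum_product]
  refine Finset.sum_congr rfl fun j hj => Finset.sum_congr rfl fun A hA => ?_
  rw [vv, map_mul]
  ring

end Stmt4Aux

namespace Stmt4Aux

lemma dd_pos (A : Finset ℕ) : 0 < dd A :=
  Finset.prod_pos fun i _ => (Nat.prime_nth_prime i).pos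

lemma dd_dvd_of_subset {m : ℕ} (hm : m ≠ 0) {A : Finset ℕ}
    (hA : ∀ i ∈ A, Nat.nth Nat.Prime i ∣ m) : dd A ∣ m := by
  have hinj : Set.InjOn (Nat.nth Nat.Prime) A :=
    (Nat.nth_injective Nat.infinite_setOf_prime).injOn
  have himg : ∏ p ∈ A.image (Nat.nth Nat.Prime), p = ∏ i ∈ A, Nat.nth Nat.Prime i :=
    Finset.prod_image fun x hx y hy h => hinj hx hy h
  rw [dd, ← himg]
  refine Finset.prod_primes_dvd m ?_ ?_
  · intro a ha
    obtain ⟨i, _, rfl⟩ := Finset.mem_image.mp ha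
    exact (Nat.prime_nth_prime i).prime
  · intro a ha
    obtain ⟨i, hi, rfl⟩ := Finset.mem_image.mp ha
    exact hA i hi

lemma coeff_eq (n N m : ℕ) (hm1 : 1 ≤ m) (hmq : m < Nat.nth Nat.Prime n) (hmN : m ≤ N) :
    ∑ pr ∈ (idx n N).filter (fun pr => vv pr = m), eps pr.2 =
      if m = 1 then (1 : ℂ) else 0 := by
  classical
  set B : Finset ℕ := (Finset.range n).filter (fun i => Nat.nth Nat.Prime i ∣ m) with hB
  have hstep : ∑ pr ∈ (idx n N).filter (fun pr => vv pr = m), eps pr.2 =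
      ∑ A ∈ B.powerset, (-1 : ℂ) ^ A.card := by
    refine Finset.sum_nbij' (fun pr => pr.2) (fun A => (m / dd A, A)) ?_ ?_ ?_ ?_ ?_
    · intro pr hpr
      simp only [Finset.mem_filter, idx, Finset.mem_product, Finset.mem_powerset] at hpr ⊢
      obtain ⟨⟨hj, hA⟩, hv⟩ := hpr
      intro i hi
      rw [hB, Finset.mem_filter]
      refine ⟨hA hi, ?_⟩
      calc Nat.nth Nat.Prime i ∣ dd pr.2 := Finset.dvd_prod_of_mem _ hi
        _ ∣ m := hv ▸ Dvd.intro_left pr.1 rfl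
    · intro A hA
      simp only [Finset.mem_powerset, hB] at hA
      have hAdvd : dd A ∣ m := dd_dvd_of_subset (by omega) fun i hi =>
        (Finset.mem_filter.mp (hA hi)).2
      have hsub : A ⊆ Finset.range n := fun i hi => (Finset.mem_filter.mp (hA hi)).1
      simp only [Finset.mem_filter, idx, Finset.mem_product, Finset.mem_powerset,
        Finset.mem_Icc]
      refine ⟨⟨⟨?_, ?_⟩, hsub⟩, ?_⟩
      · exact Nat.div_pos (Nat.le_of_dvd (by omega) hAdvd) (dd_pos A)
      · exact le_trans (Nat.div_le_self _ _) hmN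
      · exact Nat.div_mul_cancel hAdvd
    · intro pr hpr
      simp only [Finset.mem_filter, idx, Finset.mem_product] at hpr
      obtain ⟨_, hv⟩ := hpr
      have : m / dd pr.2 = pr.1 := by
        rw [← hv, vv, Nat.mul_div_cancel _ (dd_pos pr.2)]
      exact Prod.ext this rfl
    · intro A _; rfl
    · intro pr _; rfl
  rw [hstep]
  have hz := Finset.sum_powerset_neg_one_pow_card (x := B)
  have hcast : ∑ A ∈ B.powerset, (-1 : ℂ) ^ A.card =
      ((∑ A ∈ B.powerset, (-1 : ℤ) ^ A.card : ℤ) : ℂ) := by push_cast; rfl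
  rw [hcast, hz]
  by_cases hm : m = 1
  · subst hm
    have : B = ∅ := by
      rw [hB, Finset.filter_eq_empty_iff]
      intro i _
      exact fun h => absurd (Nat.dvd_one.mp h) (Nat.Prime.one_lt (Nat.prime_nth_prime i)).ne'
    simp [this]
  · have : B ≠ ∅ := by
      obtain ⟨r, hr, hrdvd⟩ := Nat.exists_prime_and_dvd hm
      have hrm : r ≤ m := Nat.le_of_dvd (by omega) hrdvd
      have hrq : r < Nat.nth Nat.Prime n := lt_of_le_of_lt hrm hmq
      have hnth : Nat.nth Nat.Prime (Nat.count Nat.Prime r) = r := Nat.nth_count hr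
      have hlt : Nat.count Nat.Prime r < n := by
        by_contra hcon
        push_neg at hcon
        have := (Nat.nth_le_nth Nat.infinite_setOf_prime).mpr hcon
        rw [hnth] at this
        exact absurd hrq (not_lt.mpr this)
      refine Finset.ne_empty_of_mem (a := Nat.count Nat.Prime r) ?_
      rw [hB, Finset.mem_filter, Finset.mem_range]
      refine ⟨hlt, ?_⟩
      rw [hnth]
      exact hrdvd
    simp [this, hm]

end Stmt4Aux

namespace Stmt4Aux

lemma term_tendsto (k : ℕ) (χ : DirichletCharacter ℂ k) (a b : ℕ) (hab : a < b) :
    Tendsto (fun s : ℝ => ((a : ℂ) ^ (s : ℂ)) * termHom k χ s b) atTop (nhds 0) := by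
  have hb0 : (0:ℝ) < b := by
    have : 0 < b := by omega
    exact_mod_cast this
  rw [tendsto_zero_iff_norm_tendsto_zero]
  have key : ∀ s : ℝ, ‖((a : ℂ) ^ (s : ℂ)) * termHom k χ s b‖ =
      ‖χ (b : ZMod k)‖ * ((a : ℝ) / b) ^ s := by
    intro s
    rw [termHom_apply, norm_mul, norm_div, Complex.norm_cpow_real, Complex.norm_cpow_real,
      Complex.norm_natCast,
      Complex.norm_natCast, Real.div_rpow (by positivity) (by positivity)]
    have hne : ((b:ℝ)) ^ s ≠ 0 := ne_of_gt (Real.rpow_pos_of_pos hb0 s)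
    field_simp
  refine Tendsto.congr (fun s => (key s).symm) ?_
  have hlt : (a : ℝ) / b < 1 := (div_lt_one hb0).mpr (by exact_mod_cast hab)
  have h0 : (-1 : ℝ) < (a : ℝ) / b := by
    have hnn : (0:ℝ) ≤ (a : ℝ) / b := by positivity
    linarith
  simpa using (tendsto_rpow_atTop_of_base_lt_one _ h0 hlt).const_mul (‖χ (b : ZMod k)‖)

lemma small_sum (k : ℕ) (χ : DirichletCharacter ℂ k) (s : ℝ) (n N : ℕ)
    (hqN : Nat.nth Nat.Prime n ≤ N) :
    ∑ pr ∈ (idx n N).filter (fun pr => vv pr < Nat.nth Nat.Prime n),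
      eps pr.2 * termHom k χ s (vv pr) = 1 := by
  classical
  set q := Nat.nth Nat.Prime n with hqdef
  have hq2 : 2 ≤ q := (Nat.prime_nth_prime n).two_le
  have hmap : ∀ pr ∈ (idx n N).filter (fun pr => vv pr < q), vv pr ∈ Finset.Icc 1 (q-1) := by
    intro pr hpr
    rw [Finset.mem_filter] at hpr
    obtain ⟨hpr1, hpr2⟩ := hpr
    rw [idx, Finset.mem_product, Finset.mem_Icc] at hpr1
    have hd := dd_pos pr.2
    have hv1 : 1 ≤ vv pr := by
      rw [vv]
      exact Nat.one_le_iff_ne_zero.mpr (Nat.mul_ne_zero (by omega) (by omega))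
    rw [Finset.mem_Icc]
    omega
  rw [← Finset.sum_fiberwise_of_maps_to hmap (fun pr => eps pr.2 * termHom k χ s (vv pr))]
  have hinner : ∀ m ∈ Finset.Icc 1 (q-1),
      (∑ pr ∈ ((idx n N).filter (fun pr => vv pr < q)).filter (fun pr => vv pr = m),
        eps pr.2 * termHom k χ s (vv pr)) = if m = 1 then (1:ℂ) else 0 := by
    intro m hm
    rw [Finset.mem_Icc] at hm
    have hff : ((idx n N).filter (fun pr => vv pr < q)).filter (fun pr => vv pr = m) =
        (idx n N).filter (fun pr => vv pr = m) := by
      rw [Finset.filter_filter]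
      apply Finset.filter_congr
      intro pr _
      constructor
      · exact fun h => h.2
      · exact fun h => ⟨by omega, h⟩
    rw [hff]
    have hcongr : ∀ pr ∈ (idx n N).filter (fun pr => vv pr = m),
        eps pr.2 * termHom k χ s (vv pr) = eps pr.2 * termHom k χ s m := by
      intro pr hpr
      rw [(Finset.mem_filter.mp hpr).2]
    rw [Finset.sum_congr rfl hcongr, ← Finset.sum_mul,
      coeff_eq n N m (by omega) (by omega) (by omega)]
    by_cases hm1 : m = 1
    · simp [hm1]
    · simp [hm1]
  rw [Finset.sum_congr rfl hinner, Finset.sum_ite_eq' (Finset.Icc 1 (q-1)) 1 (fun _ => (1:ℂ))]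
  rw [if_pos (Finset.mem_Icc.mpr ⟨le_refl 1, by omega⟩)]

lemma filter_eq_singleton (n N : ℕ) (hqN : Nat.nth Nat.Prime n ≤ N) :
    (idx n N).filter (fun pr => vv pr = Nat.nth Nat.Prime n) =
      {(Nat.nth Nat.Prime n, (∅ : Finset ℕ))} := by
  classical
  set q := Nat.nth Nat.Prime n with hqdef
  have hq := Nat.prime_nth_prime n
  have hq2 := hq.two_le
  ext pr
  simp only [Finset.mem_filter, idx, Finset.mem_product, Finset.mem_powerset, Finset.mem_Icc,
    Finset.mem_singleton]
  constructor
  · rintro ⟨⟨⟨h1, h2⟩, hA⟩, hv⟩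
    have hdA : dd pr.2 ∣ q := Dvd.intro_left pr.1 hv
    have hempty : pr.2 = ∅ := by
      rw [Finset.eq_empty_iff_forall_notMem]
      intro i hi
      have hpi : Nat.nth Nat.Prime i ∣ q := dvd_trans (Finset.dvd_prod_of_mem _ hi) hdA
      have hor := (Nat.Prime.eq_one_or_self_of_dvd hq _ hpi)
      have hlt : Nat.nth Nat.Prime i < q :=
        (Nat.nth_lt_nth Nat.infinite_setOf_prime).mpr (Finset.mem_range.mp (hA hi))
      have h2le := (Nat.prime_nth_prime i).two_le
      omega
    have hdd : dd pr.2 = 1 := by rw [hempty, dd, Finset.prod_empty]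
    rw [vv, hdd, mul_one] at hv
    rw [Prod.ext_iff]
    exact ⟨hv, hempty⟩
  · rintro h
    rw [Prod.ext_iff] at h
    obtain ⟨h1, h2⟩ := h
    have hdd : dd pr.2 = 1 := by rw [h2, dd, Finset.prod_empty]
    refine ⟨⟨⟨?_, ?_⟩, ?_⟩, ?_⟩
    · omega
    · omega
    · rw [h2]; exact Finset.empty_subset _
    · rw [vv, hdd, mul_one, h1]

end Stmt4Aux

namespace Stmt4Aux

lemma nth_prime_le (n : ℕ) (hn : 1 ≤ n) :
    Nat.nth Nat.Prime n ≤ 2 * Nat.nth Nat.Prime (n - 1) - 1 := by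
  set P := Nat.nth Nat.Prime (n - 1) with hPdef
  have hP : Nat.Prime P := Nat.prime_nth_prime (n - 1)
  have hP2 := hP.two_le
  obtain ⟨r, hr, hPr, hr2P⟩ := Nat.exists_prime_lt_and_le_two_mul P (by omega)
  have hnth : Nat.nth Nat.Prime (Nat.count Nat.Prime r) = r := Nat.nth_count hr
  have hcount : n - 1 < Nat.count Nat.Prime r := by
    by_contra hcon
    push_neg at hcon
    have := (Nat.nth_le_nth Nat.infinite_setOf_prime).mpr hcon
    rw [hnth] at this
    rw [hPdef] at hPr
    exact absurd hPr (not_lt.mpr this)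
  have hqr : Nat.nth Nat.Prime n ≤ r := by
    have h1 : n ≤ Nat.count Nat.Prime r := by omega
    have := (Nat.nth_le_nth Nat.infinite_setOf_prime).mpr h1
    rw [hnth] at this
    exact this
  have hrne : r ≠ 2 * P := by
    intro h
    have heven : 2 ∣ r := ⟨P, h⟩
    have : r = 2 := ((Nat.Prime.eq_one_or_self_of_dvd hr 2 heven).resolve_left (by omega)).symm
    omega
  omega

end Stmt4Aux

open Stmt4Aux

/-- pₙ₊₁ = lim_{s→∞} |∑_{j=1}^{2pₙ−1} χ(j)/j^s − ∏_{k=1}^n (1 − χ(p_k)/p_k^s)⁻¹|^{-1/s},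
for n ≥ 1, provided pₙ₊₁ does not divide the modulus k. -/
theorem stmt_4 (k : ℕ) (χ : DirichletCharacter ℂ k) (n : ℕ) (hn : 1 ≤ n)
    (hdvd : ¬ Nat.nth Nat.Prime n ∣ k) :
    Tendsto (fun s : ℝ =>
      ‖((∑ j ∈ Finset.Icc 1 (2 * Nat.nth Nat.Prime (n - 1) - 1),
          χ (j : ZMod k) / (j : ℂ) ^ (s : ℂ)) -
        ∏ i ∈ Finset.range n,
          (1 - χ ((Nat.nth Nat.Prime i : ℕ) : ZMod k) /
            (Nat.nth Nat.Prime i : ℂ) ^ (s : ℂ))⁻¹)‖ ^ (-1 / s))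
      atTop (nhds (Nat.nth Nat.Prime n : ℝ)) := by
  classical
  have hqN : Nat.nth Nat.Prime n ≤ 2 * Nat.nth Nat.Prime (n - 1) - 1 := nth_prime_le n hn
  set q := Nat.nth Nat.Prime n with hqdef
  set N := 2 * Nat.nth Nat.Prime (n - 1) - 1 with hNdef
  have hq : Nat.Prime q := Nat.prime_nth_prime n
  have hq2 := hq.two_le
  have hqpos : (0:ℝ) < (q:ℝ) := by exact_mod_cast hq.pos
  -- χ q ≠ 0
  have hcop : Nat.Coprime q k := (Nat.Prime.coprime_iff_not_dvd hq).mpr hdvd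
  have hunit : IsUnit ((q : ℕ) : ZMod k) := (ZMod.isUnit_iff_coprime q k).mpr hcop
  have hχq : χ ((q : ℕ) : ZMod k) ≠ 0 := by
    obtain ⟨u, hu⟩ := hunit
    rw [← hu]
    intro h0
    have h1 : χ ((u : ZMod k) * ((u⁻¹ : (ZMod k)ˣ) : ZMod k)) = 0 := by
      rw [map_mul, h0, zero_mul]
    rw [Units.mul_inv, map_one] at h1
    exact one_ne_zero h1
  set S : ℝ → ℂ := fun s => ∑ j ∈ Finset.Icc 1 N, termHom k χ s j with hS
  set W : ℝ → ℂ := fun s =>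
    ∏ i ∈ Finset.range n, (1 - termHom k χ s (Nat.nth Nat.Prime i)) with hW
  set Q : ℝ → ℂ := fun s =>
    ∏ i ∈ Finset.range n, (1 - termHom k χ s (Nat.nth Nat.Prime i))⁻¹ with hQ
  have hgoal : Tendsto (fun s : ℝ => ‖S s - Q s‖ ^ (-1 / s)) atTop
      (nhds (q : ℝ)) → Tendsto (fun s : ℝ =>
      ‖((∑ j ∈ Finset.Icc 1 N,
          χ (j : ZMod k) / (j : ℂ) ^ (s : ℂ)) -
        ∏ i ∈ Finset.range n,
          (1 - χ ((Nat.nth Nat.Prime i : ℕ) : ZMod k) /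
            (Nat.nth Nat.Prime i : ℂ) ^ (s : ℂ))⁻¹)‖ ^ (-1 / s))
      atTop (nhds (q : ℝ)) := fun h => h
  apply hgoal
  -- limits
  have hWtend : Tendsto W atTop (nhds 1) := by
    have h1 : Tendsto (fun s : ℝ => ∏ i ∈ Finset.range n,
        (1 - termHom k χ s (Nat.nth Nat.Prime i))) atTop
        (nhds (∏ _i ∈ Finset.range n, (1:ℂ))) := by
      refine tendsto_finset_prod _ (fun i _ => ?_)
      have h2 := (Nat.prime_nth_prime i).two_le
      have h3 := term_tendsto k χ 1 (Nat.nth Nat.Prime i) (by omega)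
      simp only [Nat.cast_one, Complex.one_cpow, one_mul] at h3
      simpa using (tendsto_const_nhds (x := (1:ℂ)) (f := atTop)).sub h3
    simpa using h1
  set R : ℝ → ℂ := fun s => ∑ pr ∈ (idx n N).filter (fun pr => q < vv pr),
    eps pr.2 * termHom k χ s (vv pr) with hR
  have hkey : ∀ s : ℝ, S s * W s = 1 + termHom k χ s q + R s := by
    intro s
    rw [hS, hW, hR]
    simp only []
    rw [key_identity k χ s n N]
    rw [← Finset.sum_filter_add_sum_filter_not (idx n N) (fun pr => vv pr < q)
      (fun pr => eps pr.2 * termHom k χ s (vv pr))]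
    rw [small_sum k χ s n N hqN, add_assoc]
    congr 1
    rw [← Finset.sum_filter_add_sum_filter_not
      ((idx n N).filter (fun pr => ¬ vv pr < q)) (fun pr => vv pr = q)
      (fun pr => eps pr.2 * termHom k χ s (vv pr))]
    have hfe : ((idx n N).filter (fun pr => ¬ vv pr < q)).filter (fun pr => vv pr = q) =
        (idx n N).filter (fun pr => vv pr = q) := by
      rw [Finset.filter_filter]
      apply Finset.filter_congr
      intro pr _
      constructor
      · exact fun h => h.2
      · exact fun h => ⟨by omega, h⟩
    have hfg : ((idx n N).filter (fun pr => ¬ vv pr < q)).filter (fun pr => ¬ vv pr = q) =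
        (idx n N).filter (fun pr => q < vv pr) := by
      rw [Finset.filter_filter]
      apply Finset.filter_congr
      intro pr _
      constructor
      · rintro ⟨h1, h2⟩; omega
      · intro h; omega
    rw [hfe, hfg, filter_eq_singleton n N hqN, Finset.sum_singleton]
    congr 1
    simp [eps, vv, dd, hqdef]
  have hqs : ∀ s : ℝ, ((q:ℂ) ^ (s:ℂ)) ≠ 0 := by
    intro s h
    have habs : ‖((q:ℂ) ^ (s:ℂ))‖ = (q:ℝ) ^ s := by
      rw [Complex.norm_cpow_real, Complex.norm_natCast]
    rw [h, norm_zero] at habs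
    exact absurd habs.symm (ne_of_gt (Real.rpow_pos_of_pos hqpos s))
  have hbig : Tendsto (fun s : ℝ => ∑ pr ∈ (idx n N).filter (fun pr => q < vv pr),
      ((q:ℂ) ^ (s:ℂ)) * (eps pr.2 * termHom k χ s (vv pr))) atTop (nhds 0) := by
    have h1 : Tendsto (fun s : ℝ => ∑ pr ∈ (idx n N).filter (fun pr => q < vv pr),
        ((q:ℂ) ^ (s:ℂ)) * (eps pr.2 * termHom k χ s (vv pr))) atTop
        (nhds (∑ _pr ∈ (idx n N).filter (fun pr => q < vv pr), (0:ℂ))) := by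
      refine tendsto_finset_sum _ (fun pr hpr => ?_)
      have hlt : q < vv pr := (Finset.mem_filter.mp hpr).2
      have h2 := (term_tendsto k χ q (vv pr) hlt).const_mul (eps pr.2)
      rw [mul_zero] at h2
      refine Tendsto.congr (fun s => by ring) h2
    simpa using h1
  have hgtend : Tendsto (fun s : ℝ => ((q:ℂ) ^ (s:ℂ)) * (S s * W s - 1)) atTop
      (nhds (χ ((q:ℕ) : ZMod k))) := by
    have heq : ∀ s : ℝ, ((q:ℂ) ^ (s:ℂ)) * (S s * W s - 1) =
        χ ((q:ℕ) : ZMod k) + ∑ pr ∈ (idx n N).filter (fun pr => q < vv pr),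
          ((q:ℂ) ^ (s:ℂ)) * (eps pr.2 * termHom k χ s (vv pr)) := by
      intro s
      rw [hkey s]
      have hterm : ((q:ℂ) ^ (s:ℂ)) * termHom k χ s q = χ ((q:ℕ) : ZMod k) := by
        rw [termHom_apply, mul_div_assoc', mul_comm, mul_div_assoc, div_self (hqs s), mul_one]
      rw [show (1 + termHom k χ s q + R s - 1) = termHom k χ s q + R s by ring,
        mul_add, hterm, hR, Finset.mul_sum]
    have h3 := tendsto_const_nhds (x := χ ((q:ℕ) : ZMod k)) (f := atTop (α := ℝ)) |>.add hbig
    rw [add_zero] at h3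
    exact Tendsto.congr (fun s => (heq s).symm) h3
  have hQW : ∀ s, Q s = (W s)⁻¹ := fun s => Finset.prod_inv_distrib _
  have hWne : ∀ᶠ s in atTop, W s ≠ (0:ℂ) := hWtend.eventually_ne one_ne_zero
  have hSP : Tendsto (fun s : ℝ => ((q:ℂ) ^ (s:ℂ)) * (S s - Q s)) atTop
      (nhds (χ ((q:ℕ) : ZMod k))) := by
    have hlim : Tendsto (fun s : ℝ => (((q:ℂ) ^ (s:ℂ)) * (S s * W s - 1)) * (W s)⁻¹) atTop
        (nhds (χ ((q:ℕ) : ZMod k) * 1⁻¹)) := hgtend.mul (hWtend.inv₀ one_ne_zero)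
    rw [inv_one, mul_one] at hlim
    refine hlim.congr' ?_
    filter_upwards [hWne] with s hWs
    rw [hQW s]
    field_simp
  have hnorm : Tendsto (fun s : ℝ => ‖((q:ℂ) ^ (s:ℂ)) * (S s - Q s)‖) atTop
      (nhds ‖χ ((q:ℕ) : ZMod k)‖) := hSP.norm
  have hexp : Tendsto (fun s : ℝ => -1 / s) atTop (nhds 0) :=
    Tendsto.div_atTop tendsto_const_nhds tendsto_id
  have hpow : Tendsto (fun s : ℝ => ‖((q:ℂ) ^ (s:ℂ)) * (S s - Q s)‖ ^ (-1/s)) atTop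
      (nhds 1) := by
    have h4 := hnorm.rpow hexp (Or.inl (norm_ne_zero_iff.mpr hχq))
    simpa using h4
  have hfinal := hpow.const_mul ((q:ℕ):ℝ)
  rw [mul_one] at hfinal
  refine Tendsto.congr' ?_ hfinal
  filter_upwards [eventually_gt_atTop (0:ℝ)] with s hs
  have h1 : ‖((q:ℂ) ^ (s:ℂ)) * (S s - Q s)‖ = (q:ℝ) ^ s * ‖S s - Q s‖ := by
    rw [norm_mul, Complex.norm_cpow_real,
      Complex.norm_natCast]
  have h2 : (((q:ℝ) ^ s) : ℝ) ^ (-1/s) = ((q:ℝ)) ^ (-(1:ℝ)) := by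
    rw [← Real.rpow_mul (le_of_lt hqpos)]
    congr 1
    field_simp
  rw [h1, Real.mul_rpow (Real.rpow_nonneg (le_of_lt hqpos) s) (norm_nonneg _), h2,
    Real.rpow_neg_one, ← mul_assoc, mul_inv_cancel₀ (ne_of_gt hqpos), one_mul]
end

section
/- Let p₁ < ... < pₙ be the first n primes (n ≥ 1). Then pₙ₊₁ = lim_{s→∞} [∑_{j=1}^{2pₙ−1} j^{−s} − ∏_{k=1}^n (1 − p_k^{−s})^{−1}]^{−1/s}, where s ranges over real numbers tending to infinity (Keller's recursion for primes). -/
open Filter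

/-- The completely multiplicative function `m ↦ m^{-s}` as a `MonoidHom`. -/
private noncomputable def rpowHom (s : ℝ) : ℕ →* ℝ where
  toFun m := (m : ℝ) ^ (-s)
  map_one' := by simp
  map_mul' m k := by
    push_cast
    exact Real.mul_rpow (Nat.cast_nonneg m) (Nat.cast_nonneg k)

private lemma rpow_summable {s : ℝ} (hs : 2 ≤ s) :
    Summable (fun m : ℕ => (m : ℝ) ^ (-s)) :=
  Real.summable_nat_rpow.mpr (by linarith)

/-- Tail bound: `∑_{m ≥ M} m^{-s} ≤ 3 M² M^{-s}` for `s ≥ 2`. -/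
private lemma tail_bound {M : ℕ} (hM : 1 ≤ M) {s : ℝ} (hs : 2 ≤ s) :
    ∑' m : ℕ, Set.indicator (Set.Ici M) (fun m : ℕ => (m : ℝ) ^ (-s)) m
      ≤ 3 * (M : ℝ) ^ 2 * (M : ℝ) ^ (-s) := by
  have hM0 : (0 : ℝ) < M := by exact_mod_cast hM
  have hsum2 : Summable (fun m : ℕ => (m : ℝ) ^ (-2 : ℝ)) :=
    Real.summable_nat_rpow.mpr (by norm_num)
  have hptwise : ∀ m : ℕ,
      Set.indicator (Set.Ici M) (fun m : ℕ => (m : ℝ) ^ (-s)) m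
        ≤ (M : ℝ) ^ (-s + 2) * (m : ℝ) ^ (-2 : ℝ) := by
    intro m
    by_cases hm : m ∈ Set.Ici M
    · rw [Set.indicator_of_mem hm]
      have hmM : (M : ℝ) ≤ m := by exact_mod_cast hm
      have hm0 : (0 : ℝ) < m := lt_of_lt_of_le hM0 hmM
      have h1 : (m : ℝ) ^ (-s) = (m : ℝ) ^ (-s + 2) * (m : ℝ) ^ (-2 : ℝ) := by
        rw [← Real.rpow_add hm0]; ring_nf
      rw [h1]
      have h2 : (m : ℝ) ^ (-s + 2) ≤ (M : ℝ) ^ (-s + 2) :=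
        Real.rpow_le_rpow_of_nonpos hM0 hmM (by linarith)
      exact mul_le_mul_of_nonneg_right h2 (Real.rpow_nonneg hm0.le _)
    · rw [Set.indicator_of_notMem hm]
      positivity
  have hsum1 : Summable (Set.indicator (Set.Ici M) (fun m : ℕ => (m : ℝ) ^ (-s))) :=
    (rpow_summable hs).indicator _
  calc ∑' m : ℕ, Set.indicator (Set.Ici M) (fun m : ℕ => (m : ℝ) ^ (-s)) m
      ≤ ∑' m : ℕ, (M : ℝ) ^ (-s + 2) * (m : ℝ) ^ (-2 : ℝ) :=
        Summable.tsum_le_tsum hptwise hsum1 (hsum2.mul_left _)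
    _ = (M : ℝ) ^ (-s + 2) * ∑' m : ℕ, (m : ℝ) ^ (-2 : ℝ) := tsum_mul_left
    _ ≤ (M : ℝ) ^ (-s + 2) * 3 := by
        refine mul_le_mul_of_nonneg_left ?_ (Real.rpow_nonneg hM0.le _)
        have heq : (fun m : ℕ => (m : ℝ) ^ (-2 : ℝ)) = fun m : ℕ => 1 / (m : ℝ) ^ 2 := by
          funext m
          rcases Nat.eq_zero_or_pos m with h | h
          · subst h
            norm_num [Real.zero_rpow]
          · have hm0 : (0 : ℝ) < m := by exact_mod_cast h
            rw [show (-2 : ℝ) = -((2 : ℕ) : ℝ) by norm_num, Real.rpow_neg hm0.le,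
              Real.rpow_natCast, one_div]
        rw [heq, hasSum_zeta_two.tsum_eq]
        nlinarith [Real.pi_le_four, Real.pi_pos]
    _ = 3 * (M : ℝ) ^ 2 * (M : ℝ) ^ (-s) := by
        rw [Real.rpow_add hM0, show ((2 : ℝ)) = ((2 : ℕ) : ℝ) by norm_num, Real.rpow_natCast]
        ring

private lemma primesBelow_nth (n : ℕ) :
    (Nat.nth Nat.Prime n).primesBelow = (Finset.range n).image (Nat.nth Nat.Prime) := by
  have inf := Nat.infinite_setOf_prime
  ext k
  simp only [Nat.mem_primesBelow, Finset.mem_image, Finset.mem_range]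
  constructor
  · rintro ⟨hlt, hkp⟩
    refine ⟨Nat.count Nat.Prime k, ?_, Nat.nth_count hkp⟩
    by_contra h
    push_neg at h
    have h2 : Nat.nth Nat.Prime n ≤ k := by
      have h3 := Nat.nth_monotone inf h
      rwa [Nat.nth_count hkp] at h3
    omega
  · rintro ⟨i, hi, rfl⟩
    exact ⟨(Nat.nth_lt_nth inf).mpr hi, Nat.nth_mem_of_infinite inf i⟩

private lemma euler_eq (n : ℕ) {s : ℝ} (hs : 2 ≤ s) :
    ∏ i ∈ Finset.range n, (1 - (Nat.nth Nat.Prime i : ℝ) ^ (-s))⁻¹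
      = ∑' m : ℕ, Set.indicator ((Nat.nth Nat.Prime n).smoothNumbers)
          (fun m : ℕ => (m : ℝ) ^ (-s)) m := by
  have inf := Nat.infinite_setOf_prime
  have hsum : Summable ⇑(rpowHom s) := rpow_summable hs
  have h := EulerProduct.prod_primesBelow_geometric_eq_tsum_smoothNumbers hsum
    (Nat.nth Nat.Prime n)
  rw [tsum_subtype] at h
  have hfun : (fun m : ℕ => (m : ℝ) ^ (-s)) = ⇑(rpowHom s) := rfl
  rw [hfun, ← h, primesBelow_nth n, Finset.prod_image]
  · rfl
  · intro a _ b _ hab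
    exact Nat.nth_injective inf hab

/-- Main sandwich bound : difference of partial sum and Euler product is `q^{-s} + O((q+1)^{-s})`. -/
private lemma sandwich (n : ℕ) (hn : 1 ≤ n) {s : ℝ} (hs : 2 ≤ s) :
    |(∑ j ∈ Finset.Icc 1 (2 * Nat.nth Nat.Prime (n - 1) - 1), (j : ℝ) ^ (-s)) -
        (∏ i ∈ Finset.range n, (1 - (Nat.nth Nat.Prime i : ℝ) ^ (-s))⁻¹) -
        (Nat.nth Nat.Prime n : ℝ) ^ (-s)|
      ≤ 3 * ((Nat.nth Nat.Prime n : ℝ) + 1) ^ 2 * ((Nat.nth Nat.Prime n : ℝ) + 1) ^ (-s) := by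
  have inf := Nat.infinite_setOf_prime
  set p := Nat.nth Nat.Prime (n - 1) with hpdef
  set q := Nat.nth Nat.Prime n with hqdef
  have hpprime : p.Prime := Nat.nth_mem_of_infinite inf (n - 1)
  have hqprime : q.Prime := Nat.nth_mem_of_infinite inf n
  have hpq : p < q := (Nat.nth_lt_nth inf).mpr (by omega)
  have hp2 : 2 ≤ p := hpprime.two_le
  -- Bertrand: q ≤ 2p - 1
  obtain ⟨r, hrprime, hpr, hr2p⟩ := Nat.exists_prime_lt_and_le_two_mul p (by omega)
  have hr2p' : r ≤ 2 * p - 1 := by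
    rcases eq_or_lt_of_le hr2p with h | h
    · exfalso
      have h2 : (2 : ℕ) ∣ r := h ▸ ⟨p, rfl⟩
      have := (Nat.Prime.eq_one_or_self_of_dvd hrprime 2 h2).resolve_left (by norm_num)
      omega
    · omega
  have hqr : q ≤ r := by
    have h1 : Nat.count Nat.Prime (p + 1) = n := by
      have h : Nat.count Nat.Prime (p + 1) = n - 1 + 1 :=
        Nat.count_nth_succ_of_infinite inf (n - 1)
      omega
    have h2 : n ≤ Nat.count Nat.Prime r := by
      rw [← h1]; exact Nat.count_monotone _ (by omega)
    calc q ≤ Nat.nth Nat.Prime (Nat.count Nat.Prime r) := Nat.nth_monotone inf h2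
      _ = r := Nat.nth_count hrprime
  have hq2p : q ≤ 2 * p - 1 := hqr.trans hr2p'
  -- notation
  have hsum : Summable (fun m : ℕ => (m : ℝ) ^ (-s)) := rpow_summable hs
  have hfnn : ∀ m : ℕ, 0 ≤ (m : ℝ) ^ (-s) := fun m => Real.rpow_nonneg (Nat.cast_nonneg m) _
  set f : ℕ → ℝ := fun m => (m : ℝ) ^ (-s) with hfdef
  set g : ℕ → ℝ := Set.indicator q.smoothNumbers f with hgdef
  set w : ℕ → ℝ := Set.indicator (Set.Ici (q + 1)) f with hwdef
  have hgsum : Summable g := hsum.indicator _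
  have hwsum : Summable w := hsum.indicator _
  have hgnn : ∀ m, 0 ≤ g m := fun m => Set.indicator_nonneg (fun a _ => hfnn a) m
  have hwnn : ∀ m, 0 ≤ w m := fun m => Set.indicator_nonneg (fun a _ => hfnn a) m
  have hgle : ∀ m, g m ≤ f m := fun m => Set.indicator_le_self' (fun a _ => hfnn a) m
  set F : Finset ℕ := Finset.Icc 1 (2 * p - 1) with hFdef
  have hqF : q ∈ F := by
    rw [hFdef, Finset.mem_Icc]
    exact ⟨hqprime.one_lt.le, hq2p⟩
  have hgq : g q = 0 := by
    rw [hgdef]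
    apply Set.indicator_of_notMem
    rw [Nat.mem_smoothNumbers]
    push_neg
    intro _
    exact ⟨q, by simp [Nat.primeFactorsList_prime hqprime], le_refl q⟩
  -- the tail sum bound
  have hT : ∑' m, w m ≤ 3 * ((q : ℝ) + 1) ^ 2 * ((q : ℝ) + 1) ^ (-s) := by
    have := tail_bound (M := q + 1) (by omega) hs
    rw [hwdef]
    push_cast at this ⊢
    exact this
  have hTnn : 0 ≤ ∑' m, w m := tsum_nonneg hwnn
  -- decompose the difference
  rw [euler_eq n hs, ← hqdef]
  have hsplit := Summable.sum_add_tsum_compl (s := F) hgsum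
  have hkey : (∑ j ∈ F, f j) - (∑' m : ℕ, g m) =
      (∑ j ∈ F, (f j - g j)) - ∑' m : ↑((F : Set ℕ)ᶜ), g ↑m := by
    rw [Finset.sum_sub_distrib, ← hsplit]
    ring
  rw [show (∑' m : ℕ, Set.indicator q.smoothNumbers f m) = ∑' m : ℕ, g m from rfl]
  rw [hkey]
  -- bounds on A := ∑_{j ∈ F} (f j - g j)
  have hA_lb : f q ≤ ∑ j ∈ F, (f j - g j) := by
    have h0 := Finset.single_le_sum (f := fun j => f j - g j)
      (fun i _ => by simpa using sub_nonneg.mpr (hgle i)) hqF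
    simp only [hgq, sub_zero] at h0
    exact h0
  have hA_ub : ∑ j ∈ F, (f j - g j) ≤ f q + ∑' m, w m := by
    rw [← Finset.sum_erase_add F _ hqF, hgq, sub_zero]
    have h1 : ∑ j ∈ F.erase q, (f j - g j) ≤ ∑ j ∈ F.erase q, w j := by
      apply Finset.sum_le_sum
      intro j hj
      by_cases hjs : j ∈ q.smoothNumbers
      · rw [hgdef, Set.indicator_of_mem hjs]
        simpa using hwnn j
      · have hj1 : 1 ≤ j := by
          have := Finset.mem_of_mem_erase hj
          rw [hFdef, Finset.mem_Icc] at this; exact this.1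
        have hjq : q + 1 ≤ j := by
          rw [Nat.mem_smoothNumbers] at hjs
          push_neg at hjs
          obtain ⟨rr, hrr, hrrq⟩ := hjs (by omega)
          have hrj : rr ≤ j := Nat.le_of_dvd (by omega) (Nat.dvd_of_mem_primeFactorsList hrr)
          have hjne : j ≠ q := Finset.ne_of_mem_erase hj
          omega
        rw [hgdef, Set.indicator_of_notMem hjs, sub_zero, hwdef,
          Set.indicator_of_mem (by exact hjq : j ∈ Set.Ici (q + 1))]
      -- done
    have h2 : ∑ j ∈ F.erase q, w j ≤ ∑' m, w m :=
      Summable.sum_le_tsum _ (fun i _ => hwnn i) hwsum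
    linarith
  -- bounds on B := ∑' over complement
  have hB_nn : 0 ≤ ∑' m : ↑((F : Set ℕ)ᶜ), g ↑m :=
    tsum_nonneg (fun m => hgnn m)
  have hB_ub : ∑' m : ↑((F : Set ℕ)ᶜ), g ↑m ≤ ∑' m, w m := by
    rw [tsum_subtype]
    apply Summable.tsum_le_tsum _ (hgsum.indicator _) hwsum
    intro m
    by_cases hm : m ∈ ((F : Set ℕ)ᶜ)
    · rw [Set.indicator_of_mem hm]
      by_cases hms : m ∈ q.smoothNumbers
      · have hm0 : m ≠ 0 := hms.1
        have hmF : m ∉ F := by simpa using hm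
        rw [hFdef, Finset.mem_Icc] at hmF
        push_neg at hmF
        have hmq : q + 1 ≤ m := by
          have := hmF (by omega)
          omega
        rw [hgdef, Set.indicator_of_mem hms, hwdef,
          Set.indicator_of_mem (by exact hmq : m ∈ Set.Ici (q + 1))]
      · rw [hgdef, Set.indicator_of_notMem hms]
        exact hwnn m
    · rw [Set.indicator_of_notMem hm]
      exact hwnn m
  -- conclude
  rw [abs_le]
  constructor
  · have : f q = (q : ℝ) ^ (-s) := rfl
    nlinarith [hT, hB_ub, hA_lb, hB_nn]
  · have : f q = (q : ℝ) ^ (-s) := rfl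
    nlinarith [hT, hB_ub, hA_ub, hB_nn]

/-- Abstract limit lemma. -/
private lemma main_aux (q : ℕ) (D : ℝ → ℝ) (hq : 1 < q)
    (hb : ∀ s : ℝ, 2 ≤ s →
      |D s - (q : ℝ) ^ (-s)| ≤ 3 * ((q : ℝ) + 1) ^ 2 * ((q : ℝ) + 1) ^ (-s)) :
    Tendsto (fun s : ℝ => |D s| ^ (-1 / s)) atTop (nhds (q : ℝ)) := by
  have hq1 : (1 : ℝ) < q := by exact_mod_cast hq
  have hq0 : (0 : ℝ) < q := by linarith
  have hq10 : (0 : ℝ) < (q : ℝ) + 1 := by linarith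
  set c : ℝ := (q : ℝ) / ((q : ℝ) + 1) with hcdef
  have hc0 : 0 < c := by positivity
  have hc1 : c < 1 := by rw [hcdef, div_lt_one hq10]; linarith
  -- error term eventually small
  have hto : Tendsto (fun s : ℝ => 3 * ((q : ℝ) + 1) ^ 2 * c ^ s) atTop (nhds 0) := by
    have h := (tendsto_rpow_atTop_of_base_lt_one c (by linarith) hc1).const_mul
      (3 * ((q : ℝ) + 1) ^ 2)
    simpa using h
  have hev : ∀ᶠ s : ℝ in atTop,
      3 * ((q : ℝ) + 1) ^ 2 * ((q : ℝ) + 1) ^ (-s) ≤ 1 / 2 * (q : ℝ) ^ (-s) := by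
    filter_upwards [hto.eventually (eventually_le_nhds (by norm_num : (0:ℝ) < 1/2))]
      with s hsm
    have hX : (0 : ℝ) < (q : ℝ) ^ s := Real.rpow_pos_of_pos hq0 s
    have hY : (0 : ℝ) < ((q : ℝ) + 1) ^ s := Real.rpow_pos_of_pos hq10 s
    have hcs : c ^ s = (q : ℝ) ^ s / ((q : ℝ) + 1) ^ s := Real.div_rpow hq0.le hq10.le s
    rw [hcs] at hsm
    rw [Real.rpow_neg hq0.le, Real.rpow_neg hq10.le]
    calc 3 * ((q : ℝ) + 1) ^ 2 * (((q : ℝ) + 1) ^ s)⁻¹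
        = (3 * ((q : ℝ) + 1) ^ 2 * ((q : ℝ) ^ s / ((q : ℝ) + 1) ^ s)) * ((q : ℝ) ^ s)⁻¹ := by
          field_simp
      _ ≤ 1 / 2 * ((q : ℝ) ^ s)⁻¹ :=
          mul_le_mul_of_nonneg_right hsm (inv_nonneg.mpr hX.le)
  -- eventual bounds on v s := D s * q^s
  have hv : ∀ᶠ s : ℝ in atTop,
      0 < D s ∧ 1 / 2 ≤ D s * (q : ℝ) ^ s ∧ D s * (q : ℝ) ^ s ≤ 2 := by
    filter_upwards [hev, eventually_ge_atTop (2 : ℝ)] with s h1 h2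
    have hbb := hb s h2
    rw [abs_le] at hbb
    have hX : (0 : ℝ) < (q : ℝ) ^ s := Real.rpow_pos_of_pos hq0 s
    have hXneg : (0 : ℝ) < (q : ℝ) ^ (-s) := Real.rpow_pos_of_pos hq0 (-s)
    have hXX : (q : ℝ) ^ (-s) * (q : ℝ) ^ s = 1 := by
      rw [← Real.rpow_add hq0]; simp
    have hDlb : 1 / 2 * (q : ℝ) ^ (-s) ≤ D s := by linarith
    have hDub : D s ≤ 3 / 2 * (q : ℝ) ^ (-s) := by linarith
    refine ⟨by linarith, ?_, ?_⟩
    · nlinarith [mul_le_mul_of_nonneg_right hDlb hX.le]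
    · nlinarith [mul_le_mul_of_nonneg_right hDub hX.le]
  -- log of v over s tends to 0
  have hlogv : Tendsto (fun s : ℝ => Real.log (D s * (q : ℝ) ^ s) / s) atTop (nhds 0) := by
    apply squeeze_zero_norm' (a := fun s : ℝ => Real.log 2 / s)
    · filter_upwards [hv, eventually_ge_atTop (1 : ℝ)] with s hs hs1
      obtain ⟨hD0, hvl, hvu⟩ := hs
      have hs0 : (0 : ℝ) < s := by linarith
      have hv0 : (0 : ℝ) < D s * (q : ℝ) ^ s := by linarith
      have habs : |Real.log (D s * (q : ℝ) ^ s)| ≤ Real.log 2 := by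
        rw [abs_le]
        constructor
        · have h := Real.log_le_log (by norm_num : (0:ℝ) < 1/2) hvl
          rw [show (1/2 : ℝ) = 2⁻¹ by norm_num, Real.log_inv] at h
          linarith
        · exact Real.log_le_log hv0 hvu
      rw [Real.norm_eq_abs, abs_div, abs_of_pos hs0]
      gcongr
    · exact tendsto_const_nhds.div_atTop tendsto_id
  -- eventual formula
  have heq : ∀ᶠ s : ℝ in atTop,
      Real.exp (Real.log q - Real.log (D s * (q : ℝ) ^ s) / s) = |D s| ^ (-1 / s) := by
    filter_upwards [hv, eventually_gt_atTop (0 : ℝ)] with s hs hs0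
    obtain ⟨hD0, _, _⟩ := hs
    rw [abs_of_pos hD0, Real.rpow_def_of_pos hD0]
    congr 1
    have hlogD : Real.log (D s) = Real.log (D s * (q : ℝ) ^ s) - s * Real.log q := by
      rw [Real.log_mul hD0.ne' (Real.rpow_pos_of_pos hq0 s).ne', Real.log_rpow hq0]
      ring
    rw [hlogD]
    field_simp
    ring
  -- conclude
  have hfinal : Tendsto (fun s : ℝ =>
      Real.exp (Real.log q - Real.log (D s * (q : ℝ) ^ s) / s)) atTop (nhds (q : ℝ)) := by
    have h1 : Tendsto (fun s : ℝ => Real.log q - Real.log (D s * (q : ℝ) ^ s) / s)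
        atTop (nhds (Real.log q)) := by
      simpa using tendsto_const_nhds.sub hlogv
    have h2 := (Real.continuous_exp.tendsto (Real.log q)).comp h1
    simpa [Real.exp_log hq0, Function.comp_def] using h2
  exact hfinal.congr' heq

/-- Keller's recursion: pₙ₊₁ = lim_{s→∞}
[∑_{j=1}^{2pₙ−1} j^{−s} − ∏_{k=1}^n (1 − p_k^{−s})⁻¹]^{−1/s} (the −1/s power is
taken of the absolute value, which is eventually the same). -/
theorem stmt_5 (n : ℕ) (hn : 1 ≤ n) :
    Tendsto (fun s : ℝ =>
      |(∑ j ∈ Finset.Icc 1 (2 * Nat.nth Nat.Prime (n - 1) - 1), (j : ℝ) ^ (-s)) -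
        ∏ i ∈ Finset.range n, (1 - (Nat.nth Nat.Prime i : ℝ) ^ (-s))⁻¹| ^ (-1 / s))
      atTop (nhds (Nat.nth Nat.Prime n : ℝ)) := by
  have hqprime : (Nat.nth Nat.Prime n).Prime :=
    Nat.nth_mem_of_infinite Nat.infinite_setOf_prime n
  exact main_aux (Nat.nth Nat.Prime n)
    (fun s => (∑ j ∈ Finset.Icc 1 (2 * Nat.nth Nat.Prime (n - 1) - 1), (j : ℝ) ^ (-s)) -
      ∏ i ∈ Finset.range n, (1 - (Nat.nth Nat.Prime i : ℝ) ^ (-s))⁻¹)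
    hqprime.one_lt (fun s hs => sandwich n hn hs)
end

section
/- Let p₁ < ... < pₙ be the first n primes and pₙ₊₁ the next prime. For real s > 1, ∏_{k=1}^n (1 − p_k^{−s}) · ζ(s) − 1 = pₙ₊₁^{−s} + o(pₙ₊₁^{−s}) as s → ∞; equivalently, pₙ₊₁^s · (∏_{k=1}^n (1 − p_k^{−s}) ζ(s) − 1) → 1 as s → ∞. -/
open Filter


namespace Stmt6Aux

noncomputable def g (k : ℕ) (s : ℝ) (m : ℕ) : ℝ :=
  if m ≠ 0 ∧ ∀ i < k, ¬ (Nat.nth Nat.Prime i ∣ m) then (m : ℝ) ^ (-s) else 0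

lemma g_nonneg (k : ℕ) (s : ℝ) (m : ℕ) : 0 ≤ g k s m := by
  unfold g; split
  · positivity
  · exact le_rfl

lemma g_le (k : ℕ) (s : ℝ) (m : ℕ) : g k s m ≤ (m : ℝ) ^ (-s) := by
  unfold g; split
  · exact le_rfl
  · positivity

lemma summable_rpow {s : ℝ} (hs : 1 < s) : Summable (fun m : ℕ => (m : ℝ) ^ (-s)) :=
  Real.summable_nat_rpow.mpr (by linarith)

lemma summable_g (k : ℕ) {s : ℝ} (hs : 1 < s) : Summable (g k s) :=
  (summable_rpow hs).of_nonneg_of_le (g_nonneg k s) (g_le k s)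

lemma nth_lt_nth' {i k : ℕ} (h : i < k) : Nat.nth Nat.Prime i < Nat.nth Nat.Prime k :=
  (Nat.nth_lt_nth Nat.infinite_setOf_prime).mpr h

lemma tsum_g_zero {s : ℝ} (hs : 1 < s) : ∑' m, g 0 s m = ∑' m : ℕ, (m : ℝ) ^ (-s) := by
  refine tsum_congr fun m => ?_
  unfold g
  rcases eq_or_ne m 0 with rfl | hm
  · simp [Real.zero_rpow (by linarith : -s ≠ 0)]
  · simp [hm]

lemma tsum_g_succ (k : ℕ) {s : ℝ} (hs : 1 < s) :
    ∑' m, g (k + 1) s m = (1 - (Nat.nth Nat.Prime k : ℝ) ^ (-s)) * ∑' m, g k s m := by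
  classical
  set p := Nat.nth Nat.Prime k with hpdef
  have hpp : p.Prime := Nat.prime_nth_prime k
  have hp0 : p ≠ 0 := hpp.ne_zero
  set h : ℕ → ℝ := fun m => if p ∣ m then g k s m else 0 with hh
  have hcc : ∀ m : ℕ, ((m ≠ 0 ∧ ∀ i < k + 1, ¬ (Nat.nth Nat.Prime i ∣ m)) ↔
      ((m ≠ 0 ∧ ∀ i < k, ¬ (Nat.nth Nat.Prime i ∣ m)) ∧ ¬ p ∣ m)) := by
    intro m
    constructor
    · rintro ⟨hm0, hall⟩
      exact ⟨⟨hm0, fun i hi => hall i (hi.trans (Nat.lt_succ_self k))⟩,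
        hall k (Nat.lt_succ_self k)⟩
    · rintro ⟨⟨hm0, hall⟩, hd⟩
      refine ⟨hm0, fun i hi => ?_⟩
      rcases Nat.lt_succ_iff_lt_or_eq.mp hi with hi' | rfl
      · exact hall i hi'
      · exact hd
  have hg1 : ∀ m, g (k + 1) s m = g k s m - h m := by
    intro m
    simp only [hh]
    unfold g
    rw [if_congr (hcc m) rfl rfl]
    by_cases hc : m ≠ 0 ∧ ∀ i < k, ¬ (Nat.nth Nat.Prime i ∣ m) <;>
      by_cases hd : p ∣ m
    · rw [if_neg (fun x => x.2 hd), if_pos hc, if_pos hd]; ring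
    · rw [if_pos ⟨hc, hd⟩, if_pos hc, if_neg hd]; ring
    · rw [if_neg (fun x => hc x.1), if_neg hc, if_pos hd]; ring
    · rw [if_neg (fun x => hc x.1), if_neg hc, if_neg hd]; ring
  have hcond : ∀ m : ℕ, ((p * m ≠ 0 ∧ ∀ i < k, ¬ (Nat.nth Nat.Prime i ∣ p * m)) ↔
      (m ≠ 0 ∧ ∀ i < k, ¬ (Nat.nth Nat.Prime i ∣ m))) := by
    intro m
    constructor
    · rintro ⟨hm0, hall⟩
      refine ⟨fun h0 => hm0 (by simp [h0]), fun i hi hdvd => hall i hi (hdvd.mul_left p)⟩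
    · rintro ⟨hm0, hall⟩
      refine ⟨mul_ne_zero hp0 hm0, fun i hi hdvd => ?_⟩
      rcases (Nat.Prime.dvd_mul (Nat.prime_nth_prime i)).mp hdvd with hip | him
      · have : Nat.nth Nat.Prime i = p :=
          (Nat.prime_dvd_prime_iff_eq (Nat.prime_nth_prime i) hpp).mp hip
        exact absurd this (ne_of_lt (nth_lt_nth' hi))
      · exact hall i hi him
  have hcomp : ∀ m : ℕ, h (p * m) = (p : ℝ) ^ (-s) * g k s m := by
    intro m
    simp only [hh]
    rw [if_pos (dvd_mul_right p m)]
    unfold g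
    by_cases hc : m ≠ 0 ∧ ∀ i < k, ¬ (Nat.nth Nat.Prime i ∣ m)
    · rw [if_pos ((hcond m).mpr hc), if_pos hc]
      push_cast
      rw [Real.mul_rpow (by positivity) (by positivity)]
    · rw [if_neg (fun hx => hc ((hcond m).mp hx)), if_neg hc, mul_zero]
  have hinj : Function.Injective fun m : ℕ => p * m := fun a b hab =>
    Nat.eq_of_mul_eq_mul_left hpp.pos hab
  have hsupp : Function.support h ⊆ Set.range (fun m : ℕ => p * m) := by
    intro m hm
    have hd : p ∣ m := by
      by_contra hd
      apply hm
      simp only [hh]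
      rw [if_neg hd]
    obtain ⟨c, rfl⟩ := hd
    exact ⟨c, rfl⟩
  have hsum : ∑' m, h m = (p : ℝ) ^ (-s) * ∑' m, g k s m := by
    rw [← hinj.tsum_eq hsupp]
    simp only [hcomp]
    exact tsum_mul_left
  have hsummh : Summable h := by
    refine (summable_g k hs).of_nonneg_of_le (fun m => ?_) (fun m => ?_)
    · simp only [hh]
      split
      · exact g_nonneg k s m
      · exact le_rfl
    · simp only [hh]
      split
      · exact le_rfl
      · exact g_nonneg k s m
  calc ∑' m, g (k + 1) s m = ∑' m, (g k s m - h m) := tsum_congr hg1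
    _ = ∑' m, g k s m - ∑' m, h m := Summable.tsum_sub (summable_g k hs) hsummh
    _ = (1 - (p : ℝ) ^ (-s)) * ∑' m, g k s m := by rw [hsum]; ring

lemma tsum_g (k : ℕ) {s : ℝ} (hs : 1 < s) :
    ∑' m, g k s m =
      (∏ i ∈ Finset.range k, (1 - (Nat.nth Nat.Prime i : ℝ) ^ (-s))) *
        ∑' m : ℕ, (m : ℝ) ^ (-s) := by
  induction k with
  | zero => simpa using tsum_g_zero hs
  | succ k ih => rw [tsum_g_succ k hs, ih, Finset.prod_range_succ]; ring

lemma nth_le_of_forall_not_dvd {n m : ℕ} (hm : 2 ≤ m)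
    (h : ∀ i < n, ¬ (Nat.nth Nat.Prime i ∣ m)) : Nat.nth Nat.Prime n ≤ m := by
  have hq : m.minFac.Prime := Nat.minFac_prime (by omega)
  have hdvd := Nat.minFac_dvd m
  have hnth : Nat.nth Nat.Prime (Nat.count Nat.Prime m.minFac) = m.minFac :=
    Nat.nth_count hq
  have hin : n ≤ Nat.count Nat.Prime m.minFac := by
    by_contra hlt
    exact h _ (by omega) (hnth ▸ hdvd)
  calc Nat.nth Nat.Prime n ≤ Nat.nth Nat.Prime (Nat.count Nat.Prime m.minFac) :=
        Nat.nth_monotone Nat.infinite_setOf_prime hin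
    _ = m.minFac := hnth
    _ ≤ m := Nat.minFac_le (by omega)

end Stmt6Aux

section Main
open Stmt6Aux

/-- pₙ₊₁^s · (∏_{k=1}^n (1 − p_k^{−s}) ζ(s) − 1) → 1 as real s → ∞,
where ζ(s) = ∑_{m≥1} m^{−s}. -/
theorem stmt_6 (n : ℕ) :
    Tendsto (fun s : ℝ =>
      (Nat.nth Nat.Prime n : ℝ) ^ s *
        ((∏ i ∈ Finset.range n, (1 - (Nat.nth Nat.Prime i : ℝ) ^ (-s))) *
          (∑' m : ℕ, (m : ℝ) ^ (-s)) - 1))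
      atTop (nhds 1) := by
  classical
  set p : ℕ := Nat.nth Nat.Prime n with hpdef
  have hpp : p.Prime := Nat.prime_nth_prime n
  have hp2 : 2 ≤ p := hpp.two_le
  have hppos : (0 : ℝ) < p := by exact_mod_cast hpp.pos
  set y : ℝ := (p : ℝ) / (p + 1) with hy
  have hy0 : 0 < y := by positivity
  have hy1 : y < 1 := by rw [hy, div_lt_one (by positivity)]; linarith
  set C : ℝ := (p : ℝ) ^ (2 : ℝ) * ∑' m : ℕ, (m : ℝ) ^ (-(2 : ℝ)) with hC
  have hdomsum : Summable (fun m : ℕ => (p : ℝ) ^ (2 : ℝ) * (m : ℝ) ^ (-(2 : ℝ))) :=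
    (summable_rpow (by norm_num)).mul_left _
  -- per-term bound for s ≥ 2
  have hterm : ∀ s : ℝ, 2 ≤ s → ∀ m : ℕ,
      (if m = p then 0 else (p : ℝ) ^ s * (if m = 1 then 0 else g n s m)) ≤
        y ^ (s - 2) * ((p : ℝ) ^ (2 : ℝ) * (m : ℝ) ^ (-(2 : ℝ))) := by
    intro s hs2 m
    have hrhs : 0 ≤ y ^ (s - 2) * ((p : ℝ) ^ (2 : ℝ) * (m : ℝ) ^ (-(2 : ℝ))) := by
      positivity
    by_cases hmp : m = p
    · simpa [hmp] using hrhs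
    by_cases hm1 : m = 1
    · simpa [hmp, hm1] using hrhs
    rw [if_neg hmp, if_neg hm1]
    unfold g
    by_cases hc : m ≠ 0 ∧ ∀ i < n, ¬ (Nat.nth Nat.Prime i ∣ m)
    swap
    · rw [if_neg hc, mul_zero]; exact hrhs
    rw [if_pos hc]
    have hm2 : 2 ≤ m := by
      rcases hc with ⟨h0, -⟩
      omega
    have hpm : p ≤ m := nth_le_of_forall_not_dvd hm2 hc.2
    have hpm1 : p + 1 ≤ m := by
      rcases lt_or_eq_of_le hpm with h | h
      · omega
      · exact absurd h.symm hmp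
    have hmpos : (0 : ℝ) < m := by
      have : 0 < m := by omega
      exact_mod_cast this
    have hpm1' : (p : ℝ) + 1 ≤ (m : ℝ) := by exact_mod_cast hpm1
    set x : ℝ := (p : ℝ) / m with hx
    have hx0 : 0 < x := by positivity
    have hxy : x ≤ y := by
      rw [hx, hy]
      exact div_le_div_of_nonneg_left hppos.le (by positivity) hpm1'
    have hkey : (p : ℝ) ^ s * (m : ℝ) ^ (-s) = x ^ s := by
      rw [hx, Real.div_rpow hppos.le hmpos.le, Real.rpow_neg hmpos.le, div_eq_mul_inv]
    have hkey2 : (p : ℝ) ^ (2 : ℝ) * (m : ℝ) ^ (-(2 : ℝ)) = x ^ (2 : ℝ) := by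
      rw [hx, Real.div_rpow hppos.le hmpos.le, Real.rpow_neg hmpos.le, div_eq_mul_inv]
    rw [hkey, hkey2]
    have hsplit : x ^ s = x ^ (2 : ℝ) * x ^ (s - 2) := by
      rw [← Real.rpow_add hx0]; ring_nf
    rw [hsplit, mul_comm (y ^ (s - 2))]
    exact mul_le_mul_of_nonneg_left
      (Real.rpow_le_rpow hx0.le hxy (by linarith)) (by positivity)
  -- nonnegativity of each term
  have htermnn : ∀ s : ℝ, ∀ m : ℕ,
      0 ≤ (if m = p then 0 else (p : ℝ) ^ s * (if m = 1 then 0 else g n s m)) := by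
    intro s m
    split
    · exact le_rfl
    · have hg := g_nonneg n s m
      split
      · simp
      · positivity
  -- the eventual identity
  have hEq : ∀ s : ℝ, 2 ≤ s →
      (p : ℝ) ^ s *
        ((∏ i ∈ Finset.range n, (1 - (Nat.nth Nat.Prime i : ℝ) ^ (-s))) *
          (∑' m : ℕ, (m : ℝ) ^ (-s)) - 1) =
      1 + ∑' m : ℕ, (if m = p then 0 else (p : ℝ) ^ s * (if m = 1 then 0 else g n s m)) := by
    intro s hs2
    have hs : 1 < s := by linarith
    have hsum := summable_g n (s := s) hs
    have h1 : (∏ i ∈ Finset.range n, (1 - (Nat.nth Nat.Prime i : ℝ) ^ (-s))) *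
        (∑' m : ℕ, (m : ℝ) ^ (-s)) = ∑' m, g n s m := (tsum_g n hs).symm
    have hg1 : g n s 1 = 1 := by
      have hcond1 : (1 : ℕ) ≠ 0 ∧ ∀ i < n, ¬ (Nat.nth Nat.Prime i ∣ 1) :=
        ⟨one_ne_zero, fun i _ hdvd =>
          (Nat.prime_nth_prime i).one_lt.ne' (Nat.dvd_one.mp hdvd)⟩
      unfold g
      rw [if_pos hcond1, Nat.cast_one, Real.one_rpow]
    have hgp : g n s p = (p : ℝ) ^ (-s) := by
      have hcondp : p ≠ 0 ∧ ∀ i < n, ¬ (Nat.nth Nat.Prime i ∣ p) :=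
        ⟨hpp.pos.ne', fun i hi hdvd =>
          (ne_of_lt (nth_lt_nth' hi))
            ((Nat.prime_dvd_prime_iff_eq (Nat.prime_nth_prime i) hpp).mp hdvd)⟩
      unfold g
      rw [if_pos hcondp]
    have hsumite : Summable (fun m : ℕ => if m = 1 then 0 else g n s m) := by
      refine hsum.of_nonneg_of_le (fun m => ?_) (fun m => ?_)
      · split
        · exact le_rfl
        · exact g_nonneg n s m
      · split
        · exact g_nonneg n s m
        · exact le_rfl
    have hG : Summable (fun m : ℕ => (p : ℝ) ^ s * (if m = 1 then 0 else g n s m)) :=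
      hsumite.mul_left _
    calc (p : ℝ) ^ s *
        ((∏ i ∈ Finset.range n, (1 - (Nat.nth Nat.Prime i : ℝ) ^ (-s))) *
          (∑' m : ℕ, (m : ℝ) ^ (-s)) - 1)
        = (p : ℝ) ^ s * (∑' m, g n s m - 1) := by rw [h1]
      _ = (p : ℝ) ^ s * (∑' m : ℕ, if m = 1 then 0 else g n s m) := by
          rw [Summable.tsum_eq_add_tsum_ite hsum 1, hg1]; ring_nf
      _ = ∑' m : ℕ, (p : ℝ) ^ s * (if m = 1 then 0 else g n s m) := tsum_mul_left.symm
      _ = 1 + ∑' m : ℕ,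
            (if m = p then 0 else (p : ℝ) ^ s * (if m = 1 then 0 else g n s m)) := by
          rw [Summable.tsum_eq_add_tsum_ite hG p]
          congr 1
          rw [if_neg (by omega : p ≠ 1), hgp, ← Real.rpow_add hppos]
          norm_num
  -- the remainder tends to 0
  have hupper : Tendsto (fun s : ℝ => y ^ (s - 2) * C) atTop (nhds 0) := by
    have h1 : Tendsto (fun s : ℝ => y ^ (s - 2)) atTop (nhds 0) := by
      have h2 := (tendsto_rpow_atTop_of_base_lt_one y (by linarith) hy1).comp
        (tendsto_atTop_add_const_right atTop (-2 : ℝ) tendsto_id)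
      simpa [Function.comp_def, sub_eq_add_neg] using h2
    simpa using h1.mul_const C
  have key : Tendsto (fun s : ℝ => ∑' m : ℕ,
      (if m = p then 0 else (p : ℝ) ^ s * (if m = 1 then 0 else g n s m)))
      atTop (nhds 0) := by
    refine tendsto_of_tendsto_of_tendsto_of_le_of_le' tendsto_const_nhds hupper
      (Eventually.of_forall fun s => tsum_nonneg (htermnn s)) ?_
    filter_upwards [eventually_ge_atTop (2 : ℝ)] with s hs2
    have hsummF : Summable (fun m : ℕ =>
        if m = p then 0 else (p : ℝ) ^ s * (if m = 1 then 0 else g n s m)) :=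
      ((hdomsum.mul_left (y ^ (s - 2))).of_nonneg_of_le (htermnn s) (hterm s hs2))
    calc ∑' m : ℕ, (if m = p then 0 else (p : ℝ) ^ s * (if m = 1 then 0 else g n s m))
        ≤ ∑' m : ℕ, y ^ (s - 2) * ((p : ℝ) ^ (2 : ℝ) * (m : ℝ) ^ (-(2 : ℝ))) :=
          Summable.tsum_le_tsum (hterm s hs2) hsummF (hdomsum.mul_left _)
      _ = y ^ (s - 2) * C := by rw [tsum_mul_left, tsum_mul_left]
  have hfinal : Tendsto (fun s : ℝ => 1 + ∑' m : ℕ,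
      (if m = p then 0 else (p : ℝ) ^ s * (if m = 1 then 0 else g n s m)))
      atTop (nhds 1) := by
    simpa using (tendsto_const_nhds : Tendsto (fun _ : ℝ => (1 : ℝ)) atTop _).add key
  exact hfinal.congr' ((eventually_ge_atTop (2 : ℝ)).mono fun s hs => (hEq s hs).symm)

end Main
end

section
/- Let χ be a Dirichlet character modulo k and n ≥ 1. Suppose pₙ₊₁ ∤ k, where pₙ₊₁ is the (n+1)-st prime. Then for the function f(s) = ∑_{j=1}^{2pₙ−1} χ(j)/j^s − ∏_{k=1}^n (1 − χ(p_k)/p_k^s)^{−1} (real s), one has lim_{s→∞} pₙ₊₁^s · f(s) = χ(pₙ₊₁); in particular f(s) ≠ 0 for all sufficiently large s. -/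
open Filter

namespace Stmt10Aux

variable {k : ℕ}

noncomputable def termHom (χ : DirichletCharacter ℂ k) (s : ℝ) : ℕ →* ℂ where
  toFun m := χ (m : ZMod k) / (m : ℂ) ^ (s : ℂ)
  map_one' := by simp
  map_mul' a b := by
    simp only [Nat.cast_mul]
    rw [Complex.natCast_mul_natCast_cpow, map_mul, div_mul_div_comm]

lemma norm_term_le (χ : DirichletCharacter ℂ k) {s : ℝ} (hs : 0 < s) (m : ℕ) :
    ‖χ (m : ZMod k) / (m : ℂ) ^ (s : ℂ)‖ ≤ (((m : ℝ)) ^ s)⁻¹ := by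
  rcases Nat.eq_zero_or_pos m with rfl | hm
  · simp [Complex.zero_cpow (by exact_mod_cast hs.ne' : (s : ℂ) ≠ 0),
      Real.zero_rpow hs.ne']
  · rw [norm_div, Complex.norm_natCast_cpow_of_pos hm, Complex.ofReal_re, inv_eq_one_div]
    gcongr
    exact χ.norm_le_one _

lemma summable_norm (χ : DirichletCharacter ℂ k) {s : ℝ} (hs : 1 < s) :
    Summable fun m : ℕ => ‖χ (m : ZMod k) / (m : ℂ) ^ (s : ℂ)‖ :=
  Summable.of_nonneg_of_le (fun _ => norm_nonneg _)
    (fun m => norm_term_le χ (by linarith) m)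
    (Real.summable_nat_rpow_inv.mpr hs)

lemma primesBelow_nth (n : ℕ) :
    (Nat.nth Nat.Prime n).primesBelow = (Finset.range n).image (Nat.nth Nat.Prime) := by
  ext r
  simp only [Nat.mem_primesBelow, Finset.mem_image, Finset.mem_range]
  constructor
  · rintro ⟨hlt, hr⟩
    refine ⟨Nat.count Nat.Prime r, ?_, Nat.nth_count hr⟩
    rwa [← Nat.nth_count hr, Nat.nth_lt_nth Nat.infinite_setOf_prime] at hlt
  · rintro ⟨i, hi, rfl⟩
    exact ⟨(Nat.nth_lt_nth Nat.infinite_setOf_prime).mpr hi, Nat.prime_nth_prime i⟩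

lemma nth_prime_lt_two_mul (n : ℕ) (hn : 1 ≤ n) :
    Nat.nth Nat.Prime n < 2 * Nat.nth Nat.Prime (n - 1) := by
  have hq : (Nat.nth Nat.Prime (n-1)).Prime := Nat.prime_nth_prime _
  have hp : (Nat.nth Nat.Prime n).Prime := Nat.prime_nth_prime _
  obtain ⟨r, hr, hqr, hr2⟩ :=
    Nat.exists_prime_lt_and_le_two_mul (Nat.nth Nat.Prime (n-1)) hq.pos.ne'
  have hcr : n ≤ Nat.count Nat.Prime r := by
    by_contra h
    push_neg at h
    have h2 : Nat.count Nat.Prime r ≤ n - 1 := by omega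
    have h3 := (Nat.nth_le_nth Nat.infinite_setOf_prime).mpr h2
    rw [Nat.nth_count hr] at h3
    have h4 : r ≤ Nat.nth Nat.Prime (n - 1) := h3
    omega
  have hpr : Nat.nth Nat.Prime n ≤ r := by
    have := (Nat.nth_le_nth Nat.infinite_setOf_prime).mpr hcr
    rwa [Nat.nth_count hr] at this
  rcases lt_or_eq_of_le (hpr.trans hr2) with h | h
  · exact h
  · exfalso
    rcases hp.eq_one_or_self_of_dvd 2 ⟨_, h⟩ with h' | h'
    · norm_num at h'
    · have := hq.two_le; omega

lemma tendsto_cpow_mul_term (χ : DirichletCharacter ℂ k) {p j : ℕ} (hp : 0 < p)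
    (hpj : p < j) :
    Tendsto (fun s : ℝ => ((p : ℕ) : ℂ) ^ ((s : ℝ) : ℂ) *
        (χ (j : ZMod k) / (j : ℂ) ^ ((s : ℝ) : ℂ))) atTop (nhds 0) := by
  have hj0 : 0 < j := hp.trans hpj
  refine squeeze_zero_norm (fun s => ?_)
    (tendsto_rpow_atTop_of_base_lt_one ((p : ℝ) / (j : ℝ))
      (neg_one_lt_zero.trans_le (by positivity))
      ((div_lt_one (by exact_mod_cast hj0)).mpr (by exact_mod_cast hpj)))
  rw [norm_mul, norm_div, Complex.norm_natCast_cpow_of_pos hp,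
    Complex.norm_natCast_cpow_of_pos hj0, Complex.ofReal_re,
    Real.div_rpow (Nat.cast_nonneg p) (Nat.cast_nonneg j)]
  calc (p:ℝ) ^ s * (‖χ (j : ZMod k)‖ / (j:ℝ) ^ s)
      ≤ (p:ℝ) ^ s * (1 / (j:ℝ) ^ s) := by
        gcongr
        exact χ.norm_le_one _
    _ = (p:ℝ) ^ s / (j:ℝ) ^ s := by rw [mul_one_div]

lemma tendsto_cpow_mul_tail (χ : DirichletCharacter ℂ k) (S : Set ℕ) {p M : ℕ}
    (hp0 : 0 < p) (hpM : p < M + 1) :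
    Tendsto (fun s : ℝ => ((p : ℕ) : ℂ) ^ ((s : ℝ) : ℂ) *
      ∑' m : ℕ, Set.indicator S
        (fun m : ℕ => χ (m : ZMod k) / (m : ℂ) ^ ((s : ℝ) : ℂ)) (m + (M+1)))
      atTop (nhds 0) := by
  have hM0 : (0:ℝ) < (M:ℝ) + 1 := by positivity
  have hr0 : (0:ℝ) < (p : ℝ) / ((M:ℝ) + 1) := by positivity
  have hr1 : (p : ℝ) / ((M:ℝ) + 1) < 1 := (div_lt_one hM0).mpr (by exact_mod_cast hpM)
  have hx : ∀ m : ℕ, (0:ℝ) < ((m + (M+1) : ℕ) : ℝ) := fun m => by positivity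
  have hxge : ∀ m : ℕ, (M:ℝ) + 1 ≤ ((m + (M+1) : ℕ) : ℝ) := fun m => by push_cast; linarith
  have hv : Summable (fun m : ℕ => ((p:ℝ) / ((m + (M+1) : ℕ) : ℝ)) ^ (2:ℝ)) := by
    have base : Summable (fun m : ℕ => ((((m + (M+1) : ℕ) : ℝ)) ^ (2:ℝ))⁻¹) :=
      (summable_nat_add_iff (f := fun n : ℕ => (((n : ℝ)) ^ (2:ℝ))⁻¹) (M+1)).mpr (Real.summable_nat_rpow_inv.mpr one_lt_two)
    refine (base.mul_left ((p:ℝ) ^ (2:ℝ))).congr fun m => ?_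
    rw [Real.div_rpow (Nat.cast_nonneg p) (hx m).le, div_eq_mul_inv]
  refine squeeze_zero_norm'
    (a := fun s : ℝ => (∑' m : ℕ, ((p : ℝ) / ((m + (M+1) : ℕ) : ℝ)) ^ (2:ℝ)) *
      ((p : ℝ) / ((M:ℝ) + 1)) ^ (s - 2)) ?_ ?_
  · filter_upwards [eventually_ge_atTop (2:ℝ)] with s hs2
    have hs1 : (1:ℝ) < s := by linarith
    have hsum2 : Summable (fun m : ℕ => (((m + (M+1) : ℕ) : ℝ) ^ s)⁻¹) :=
      (summable_nat_add_iff (f := fun n : ℕ => (((n : ℝ)) ^ s)⁻¹) (M+1)).mpr (Real.summable_nat_rpow_inv.mpr hs1)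
    have hbound : ∀ m : ℕ,
        ‖Set.indicator S (fun m : ℕ => χ (m : ZMod k) / (m : ℂ) ^ ((s:ℝ) : ℂ)) (m + (M+1))‖
          ≤ (((m + (M+1) : ℕ) : ℝ) ^ s)⁻¹ := fun m =>
      le_trans (norm_indicator_le_norm_self _ _) (norm_term_le χ (by linarith) _)
    have hsumInd : Summable (fun m : ℕ =>
        ‖Set.indicator S (fun m : ℕ => χ (m : ZMod k) / (m : ℂ) ^ ((s:ℝ) : ℂ)) (m + (M+1))‖) :=
      Summable.of_nonneg_of_le (fun _ => norm_nonneg _) hbound hsum2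
    have key : ∀ m : ℕ, (p:ℝ) ^ s * (((m + (M+1) : ℕ) : ℝ) ^ s)⁻¹
        ≤ ((p : ℝ) / ((m + (M+1) : ℕ) : ℝ)) ^ (2:ℝ) * ((p : ℝ) / ((M:ℝ) + 1)) ^ (s - 2) := by
      intro m
      have hxm := hx m
      have hpx : (0:ℝ) < (p:ℝ) / ((m + (M+1) : ℕ) : ℝ) := by positivity
      calc (p:ℝ) ^ s * (((m + (M+1) : ℕ) : ℝ) ^ s)⁻¹
          = ((p:ℝ) / ((m + (M+1) : ℕ) : ℝ)) ^ s := by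
            rw [Real.div_rpow (Nat.cast_nonneg p) hxm.le, div_eq_mul_inv]
        _ = ((p:ℝ) / ((m + (M+1) : ℕ) : ℝ)) ^ (2:ℝ)
              * ((p:ℝ) / ((m + (M+1) : ℕ) : ℝ)) ^ (s - 2) := by
            rw [← Real.rpow_add hpx]; norm_num
        _ ≤ ((p:ℝ) / ((m + (M+1) : ℕ) : ℝ)) ^ (2:ℝ) * ((p : ℝ) / ((M:ℝ) + 1)) ^ (s - 2) := by
            refine mul_le_mul_of_nonneg_left ?_ (Real.rpow_nonneg hpx.le _)
            refine Real.rpow_le_rpow hpx.le ?_ (by linarith)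
            exact div_le_div_of_nonneg_left (Nat.cast_nonneg p) hM0 (hxge m)
    calc ‖((p : ℕ) : ℂ) ^ ((s:ℝ) : ℂ) *
          ∑' m : ℕ, Set.indicator S
            (fun m : ℕ => χ (m : ZMod k) / (m : ℂ) ^ ((s:ℝ) : ℂ)) (m + (M+1))‖
        = (p:ℝ) ^ s * ‖∑' m : ℕ, Set.indicator S
            (fun m : ℕ => χ (m : ZMod k) / (m : ℂ) ^ ((s:ℝ) : ℂ)) (m + (M+1))‖ := by
          rw [norm_mul, Complex.norm_natCast_cpow_of_pos hp0, Complex.ofReal_re]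
      _ ≤ (p:ℝ) ^ s * ∑' m : ℕ, (((m + (M+1) : ℕ) : ℝ) ^ s)⁻¹ := by
          refine mul_le_mul_of_nonneg_left ?_ (Real.rpow_nonneg (Nat.cast_nonneg p) s)
          exact le_trans (norm_tsum_le_tsum_norm hsumInd) (Summable.tsum_le_tsum hbound hsumInd hsum2)
      _ = ∑' m : ℕ, (p:ℝ) ^ s * (((m + (M+1) : ℕ) : ℝ) ^ s)⁻¹ := by rw [tsum_mul_left]
      _ ≤ ∑' m : ℕ, ((p : ℝ) / ((m + (M+1) : ℕ) : ℝ)) ^ (2:ℝ) * ((p : ℝ) / ((M:ℝ) + 1)) ^ (s - 2) :=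
          Summable.tsum_le_tsum key (hsum2.mul_left _) (hv.mul_right _)
      _ = (∑' m : ℕ, ((p : ℝ) / ((m + (M+1) : ℕ) : ℝ)) ^ (2:ℝ)) * ((p : ℝ) / ((M:ℝ) + 1)) ^ (s - 2) := by
          rw [tsum_mul_right]
  · have h := tendsto_rpow_atTop_of_base_lt_one ((p : ℝ) / ((M:ℝ) + 1)) (by linarith) hr1
    have h2 : Tendsto (fun s : ℝ => ((p : ℝ) / ((M:ℝ) + 1)) ^ (s - 2)) atTop (nhds 0) := by
      have := h.comp (tendsto_atTop_add_const_right atTop (-2:ℝ) tendsto_id)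
      refine this.congr fun s => ?_
      simp [Function.comp, sub_eq_add_neg]
    have h3 := h2.const_mul (∑' m : ℕ, ((p : ℝ) / ((m + (M+1) : ℕ) : ℝ)) ^ (2:ℝ))
    simpa using h3

end Stmt10Aux

/-- With f(s) = ∑_{j=1}^{2pₙ−1} χ(j)/j^s − ∏_{k=1}^n (1 − χ(p_k)/p_k^s)⁻¹ and pₙ₊₁ ∤ k:
lim_{s→∞} pₙ₊₁^s · f(s) = χ(pₙ₊₁), and f(s) ≠ 0 for all sufficiently large s. -/
theorem stmt_10 (k : ℕ) (χ : DirichletCharacter ℂ k) (n : ℕ) (hn : 1 ≤ n)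
    (hdvd : ¬ Nat.nth Nat.Prime n ∣ k)
    (f : ℝ → ℂ)
    (hf : ∀ s : ℝ, f s =
      (∑ j ∈ Finset.Icc 1 (2 * Nat.nth Nat.Prime (n - 1) - 1),
          χ (j : ZMod k) / (j : ℂ) ^ (s : ℂ)) -
        ∏ i ∈ Finset.range n,
          (1 - χ ((Nat.nth Nat.Prime i : ℕ) : ZMod k) /
            (Nat.nth Nat.Prime i : ℂ) ^ (s : ℂ))⁻¹) :
    Tendsto (fun s : ℝ => ((Nat.nth Nat.Prime n : ℕ) : ℂ) ^ (s : ℂ) * f s)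
        atTop (nhds (χ ((Nat.nth Nat.Prime n : ℕ) : ZMod k))) ∧
      ∀ᶠ s : ℝ in atTop, f s ≠ 0 := by
  classical
  have hp : (Nat.nth Nat.Prime n).Prime := Nat.prime_nth_prime n
  have hq : (Nat.nth Nat.Prime (n-1)).Prime := Nat.prime_nth_prime _
  have hp2q : Nat.nth Nat.Prime n < 2 * Nat.nth Nat.Prime (n - 1) :=
    Stmt10Aux.nth_prime_lt_two_mul n hn
  set p := Nat.nth Nat.Prime n with hpdef
  set q := Nat.nth Nat.Prime (n-1) with hqdef
  set M := 2 * q - 1 with hMdef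
  have hpM : p ≤ M := by have := hq.two_le; omega
  have hMp : p < M + 1 := by omega
  set S : Set ℕ := Nat.smoothNumbers p with hSdef
  set A : Finset ℕ := ((Finset.Icc 1 M).filter (· ∉ S)).erase p with hAdef
  -- key identity
  have hkey : ∀ s : ℝ, 1 < s → ((p : ℕ) : ℂ) ^ ((s:ℝ) : ℂ) * f s
      = χ ((p : ℕ) : ZMod k) + ((p : ℕ) : ℂ) ^ ((s:ℝ) : ℂ) *
          ((∑ j ∈ A, χ (j : ZMod k) / (j : ℂ) ^ ((s:ℝ) : ℂ)) -
            ∑' m : ℕ, Set.indicator S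
              (fun m : ℕ => χ (m : ZMod k) / (m : ℂ) ^ ((s:ℝ) : ℂ)) (m + (M+1))) := by
    intro s hs
    have hsum : Summable (fun m : ℕ => χ (m : ZMod k) / (m : ℂ) ^ ((s:ℝ) : ℂ)) :=
      (Stmt10Aux.summable_norm χ hs).of_norm
    have hindsum : Summable (Set.indicator S
        (fun m : ℕ => χ (m : ZMod k) / (m : ℂ) ^ ((s:ℝ) : ℂ))) :=
      Summable.of_norm_bounded (Stmt10Aux.summable_norm χ hs)
        (fun m => norm_indicator_le_norm_self _ _)
    have h1 : (∏ i ∈ Finset.range n,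
        (1 - χ ((Nat.nth Nat.Prime i : ℕ) : ZMod k) /
          (Nat.nth Nat.Prime i : ℂ) ^ ((s:ℝ) : ℂ))⁻¹)
        = ∑' m : S, χ ((m : ℕ) : ZMod k) / ((m : ℕ) : ℂ) ^ ((s:ℝ) : ℂ) := by
      have h := EulerProduct.prod_primesBelow_geometric_eq_tsum_smoothNumbers
        (f := Stmt10Aux.termHom χ s) hsum p
      rw [hpdef, Stmt10Aux.primesBelow_nth n,
        Finset.prod_image (fun i _ j _ h => Nat.nth_injective Nat.infinite_setOf_prime h)] at h
      exact h
    have h2 : (∑' m : S, χ ((m : ℕ) : ZMod k) / ((m : ℕ) : ℂ) ^ ((s:ℝ) : ℂ))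
        = ∑' m : ℕ, Set.indicator S
            (fun m : ℕ => χ (m : ZMod k) / (m : ℂ) ^ ((s:ℝ) : ℂ)) m :=
      tsum_subtype S (fun m : ℕ => χ (m : ZMod k) / (m : ℂ) ^ ((s:ℝ) : ℂ))
    have h3 := Summable.sum_add_tsum_nat_add (f := Set.indicator S
        (fun m : ℕ => χ (m : ZMod k) / (m : ℂ) ^ ((s:ℝ) : ℂ))) (M+1) hindsum
    have h4 : ∑ i ∈ Finset.range (M+1), Set.indicator S
          (fun m : ℕ => χ (m : ZMod k) / (m : ℂ) ^ ((s:ℝ) : ℂ)) i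
        = ∑ j ∈ (Finset.Icc 1 M).filter (· ∈ S), χ (j : ZMod k) / (j : ℂ) ^ ((s:ℝ) : ℂ) := by
      rw [Finset.sum_indicator_eq_sum_filter]
      refine Finset.sum_congr ?_ (fun _ _ => rfl)
      ext j
      simp only [Finset.mem_filter, Finset.mem_range, Finset.mem_Icc, Nat.lt_succ_iff]
      constructor
      · rintro ⟨h1, h2⟩
        have hj0 : j ≠ 0 := (Nat.mem_smoothNumbers.mp h2).1
        exact ⟨⟨by omega, h1⟩, h2⟩
      · rintro ⟨⟨_, h1⟩, h2⟩
        exact ⟨h1, h2⟩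
    have h5 : (∑ j ∈ Finset.Icc 1 M, χ (j : ZMod k) / (j : ℂ) ^ ((s:ℝ) : ℂ))
        = (∑ j ∈ (Finset.Icc 1 M).filter (· ∈ S), χ (j : ZMod k) / (j : ℂ) ^ ((s:ℝ) : ℂ))
          + ∑ j ∈ (Finset.Icc 1 M).filter (· ∉ S), χ (j : ZMod k) / (j : ℂ) ^ ((s:ℝ) : ℂ) :=
      (Finset.sum_filter_add_sum_filter_not _ _ _).symm
    have hpmem : p ∈ (Finset.Icc 1 M).filter (· ∉ S) := by
      simp only [Finset.mem_filter, Finset.mem_Icc]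
      refine ⟨⟨hp.one_lt.le, hpM⟩, fun hmem => ?_⟩
      exact lt_irrefl p ((Nat.mem_smoothNumbers'.mp hmem) p hp dvd_rfl)
    have h6 : (∑ j ∈ (Finset.Icc 1 M).filter (· ∉ S), χ (j : ZMod k) / (j : ℂ) ^ ((s:ℝ) : ℂ))
        = χ (p : ZMod k) / (p : ℂ) ^ ((s:ℝ) : ℂ)
          + ∑ j ∈ A, χ (j : ZMod k) / (j : ℂ) ^ ((s:ℝ) : ℂ) :=
      (Finset.add_sum_erase _ _ hpmem).symm
    have hps : ((p : ℕ) : ℂ) ^ ((s:ℝ) : ℂ) ≠ 0 := by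
      intro h0
      have := Complex.norm_natCast_cpow_pos_of_pos hp.pos ((s:ℝ) : ℂ)
      rw [h0, norm_zero] at this
      exact lt_irrefl _ this
    have hcancel : ((p : ℕ) : ℂ) ^ ((s:ℝ) : ℂ) *
        (χ (p : ZMod k) / (p : ℂ) ^ ((s:ℝ) : ℂ)) = χ (p : ZMod k) := by
      rw [mul_comm, div_mul_cancel₀ _ hps]
    rw [hf s, h1, h2, ← h3, h4, h5, h6]
    linear_combination hcancel
  -- the error term tends to 0
  have hE : Tendsto (fun s : ℝ => ((p : ℕ) : ℂ) ^ ((s:ℝ) : ℂ) *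
      ((∑ j ∈ A, χ (j : ZMod k) / (j : ℂ) ^ ((s:ℝ) : ℂ)) -
        ∑' m : ℕ, Set.indicator S
          (fun m : ℕ => χ (m : ZMod k) / (m : ℂ) ^ ((s:ℝ) : ℂ)) (m + (M+1))))
      atTop (nhds 0) := by
    have heq : ∀ s : ℝ, ((p : ℕ) : ℂ) ^ ((s:ℝ) : ℂ) *
        ((∑ j ∈ A, χ (j : ZMod k) / (j : ℂ) ^ ((s:ℝ) : ℂ)) -
          ∑' m : ℕ, Set.indicator S
            (fun m : ℕ => χ (m : ZMod k) / (m : ℂ) ^ ((s:ℝ) : ℂ)) (m + (M+1)))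
        = (∑ j ∈ A, ((p : ℕ) : ℂ) ^ ((s:ℝ) : ℂ) * (χ (j : ZMod k) / (j : ℂ) ^ ((s:ℝ) : ℂ)))
          - ((p : ℕ) : ℂ) ^ ((s:ℝ) : ℂ) *
            ∑' m : ℕ, Set.indicator S
              (fun m : ℕ => χ (m : ZMod k) / (m : ℂ) ^ ((s:ℝ) : ℂ)) (m + (M+1)) := by
      intro s
      rw [mul_sub, Finset.mul_sum]
    rw [show (0:ℂ) = 0 - 0 by ring]
    refine Tendsto.congr (fun s => (heq s).symm) (Tendsto.sub ?_ ?_)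
    · rw [show (0:ℂ) = ∑ j ∈ A, (0:ℂ) from (Finset.sum_const_zero).symm]
      refine tendsto_finset_sum _ (fun j hj => ?_)
      have hjA := hj
      rw [hAdef, Finset.mem_erase, Finset.mem_filter, Finset.mem_Icc] at hjA
      obtain ⟨hjne, ⟨hj1, hjM⟩, hjS⟩ := hjA
      have hpj : p < j := by
        have hple : p ≤ j := by
          rw [hSdef, Nat.mem_smoothNumbers'] at hjS
          push_neg at hjS
          obtain ⟨r, hr, hrj, hrp⟩ := hjS
          exact le_trans hrp (Nat.le_of_dvd (by omega) hrj)
        exact lt_of_le_of_ne hple (Ne.symm hjne)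
      exact Stmt10Aux.tendsto_cpow_mul_term χ hp.pos hpj
    · exact Stmt10Aux.tendsto_cpow_mul_tail χ S hp.pos hMp
  -- χ(p) ≠ 0
  have hχp : χ ((p : ℕ) : ZMod k) ≠ 0 := by
    have hu : IsUnit ((p : ℕ) : ZMod k) := (ZMod.isUnit_prime_iff_not_dvd hp).mpr hdvd
    intro h0
    have h1 : χ ((p : ℕ) : ZMod k) * χ ((hu.unit⁻¹ : (ZMod k)ˣ) : ZMod k) = 1 := by
      rw [← map_mul, hu.mul_val_inv, map_one]
    rw [h0, zero_mul] at h1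
    exact zero_ne_one h1
  have hmain : Tendsto (fun s : ℝ => ((p : ℕ) : ℂ) ^ ((s:ℝ) : ℂ) * f s)
      atTop (nhds (χ ((p : ℕ) : ZMod k))) := by
    have h' : Tendsto (fun s : ℝ => χ ((p : ℕ) : ZMod k) + ((p : ℕ) : ℂ) ^ ((s:ℝ) : ℂ) *
        ((∑ j ∈ A, χ (j : ZMod k) / (j : ℂ) ^ ((s:ℝ) : ℂ)) -
          ∑' m : ℕ, Set.indicator S
            (fun m : ℕ => χ (m : ZMod k) / (m : ℂ) ^ ((s:ℝ) : ℂ)) (m + (M+1))))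
        atTop (nhds (χ ((p : ℕ) : ZMod k))) := by
      have := tendsto_const_nhds (x := χ ((p : ℕ) : ZMod k)) (f := atTop (α := ℝ)) |>.add hE
      simpa using this
    refine h'.congr' ?_
    filter_upwards [eventually_gt_atTop (1:ℝ)] with s hs
    exact (hkey s hs).symm
  refine ⟨hmain, ?_⟩
  filter_upwards [hmain.eventually_ne hχp] with s hs h0
  exact hs (by rw [h0, mul_zero])
end

section
/- Let (a_m)_{m≥N} be complex numbers with |a_m| ≤ 1 for all m, and let q > N ≥ 2 be an integer with a_q ≠ 0, |a_q| = 1, and a_m = 0 for N ≤ m < q. Then lim_{s→∞} |∑_{m=N}^∞ a_m m^{−s}|^{−1/s} = q, where s ranges over real numbers tending to infinity. -/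
open Filter

/-- Key limit-extraction lemma: if |aₘ| ≤ 1 for m ≥ N, q > N ≥ 2, |a_q| = 1, a_q ≠ 0,
and aₘ = 0 for N ≤ m < q, then lim_{s→∞} |∑_{m≥N} aₘ m^{−s}|^{−1/s} = q. -/
theorem stmt_12 (a : ℕ → ℂ) (N q : ℕ) (hN : 2 ≤ N) (hq : N < q)
    (ha : ∀ m, N ≤ m → ‖a m‖ ≤ 1)
    (haq : a q ≠ 0) (haq1 : ‖a q‖ = 1)
    (hzero : ∀ m, N ≤ m → m < q → a m = 0) :
    Tendsto (fun s : ℝ =>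
      ‖∑' m : {m : ℕ // N ≤ m}, a m / ((m : ℕ) : ℂ) ^ (s : ℂ)‖ ^ (-1 / s))
      atTop (nhds (q : ℝ)) := by
  have hq0 : (0:ℝ) < q := by
    have : 0 < q := by omega
    exact_mod_cast this
  set S : ℝ → ℂ := fun s => ∑' m : {m : ℕ // N ≤ m}, a m / ((m : ℕ) : ℂ) ^ (s : ℂ) with hSdef
  show Tendsto (fun s : ℝ => ‖S s‖ ^ (-1 / s)) atTop (nhds (q : ℝ))
  set F : ℝ → ℕ → ℂ := fun s m => (if N ≤ m then a m else 0) / ((m : ℕ) : ℂ) ^ (s : ℂ) with hFdef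
  -- norm of cpow
  have hcpow : ∀ (s : ℝ) (m : ℕ), 0 < m → ‖((m : ℕ) : ℂ) ^ (s : ℂ)‖ = (m:ℝ) ^ s := by
    intro s m hm
    have h1 : ((m:ℕ):ℂ) = (((m:ℝ)):ℂ) := by norm_cast
    rw [h1,
      Complex.norm_cpow_eq_rpow_re_of_pos (by exact_mod_cast hm)]
    simp
  have hnorm : ∀ s : ℝ, 0 < s → ∀ m : ℕ, ‖F s m‖ ≤ (m:ℝ) ^ (-s) := by
    intro s hs m
    rcases Nat.eq_zero_or_pos m with rfl | hm
    · simp [hFdef, Real.zero_rpow (neg_ne_zero.mpr (ne_of_gt hs)),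
        show ¬ (N ≤ 0) by omega]
    · have hm' : (0:ℝ) < (m:ℝ) := by exact_mod_cast hm
      rw [hFdef]
      simp only [norm_div, hcpow s m hm]
      rw [Real.rpow_neg hm'.le, inv_eq_one_div]
      gcongr
      split_ifs with h
      · exact ha m h
      · simp
  have hsummable : ∀ s : ℝ, 2 ≤ s → Summable (F s) := by
    intro s hs
    apply Summable.of_norm
    apply Summable.of_nonneg_of_le (fun m => norm_nonneg _) (fun m => hnorm s (by linarith) m)
    exact Real.summable_nat_rpow.mpr (by linarith)
  -- splitting the sum
  have hS_eq : ∀ s : ℝ, 2 ≤ s → S s = F s q + ∑' i : ℕ, F s (i + (q+1)) := by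
    intro s hs
    have h1 : S s = ∑' m : ℕ, F s m := by
      have hcongr : ∀ m : {m : ℕ // N ≤ m}, a m / ((m:ℕ):ℂ)^(s:ℂ) = F s (m:ℕ) := by
        intro m; rw [hFdef]; simp [m.2]
      have hsupp : Function.support (F s) ⊆ {m : ℕ | N ≤ m} := by
        intro m hm
        simp only [Function.mem_support, hFdef] at hm
        by_contra hc
        simp only [Set.mem_setOf_eq] at hc
        exact hm (by simp [hc])
      have h2 := tsum_subtype_eq_of_support_subset (f := F s) hsupp
      rw [← h2, hSdef]
      exact tsum_congr hcongr
    have h2 := Summable.sum_add_tsum_nat_add (q+1) (hsummable s hs)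
    have h3 : ∑ i ∈ Finset.range (q+1), F s i = F s q := by
      apply Finset.sum_eq_single_of_mem q (Finset.self_mem_range_succ q)
      intro b hb hbq
      have hb' : b < q + 1 := Finset.mem_range.mp hb
      rw [hFdef]
      rcases lt_or_ge b N with h | h
      · simp [show ¬ (N ≤ b) from not_le.mpr h]
      · simp [hzero b h (by omega)]
    rw [h1, ← h2, h3]
  -- tail bound
  set C : ℝ := ∑' i : ℕ, ((i + (q+1) : ℕ) : ℝ) ^ (-2 : ℝ) with hCdef
  have hCsum : Summable (fun i : ℕ => ((i + (q+1) : ℕ) : ℝ) ^ (-2 : ℝ)) := by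
    have := (summable_nat_add_iff (f := fun n : ℕ => ((n:ℕ):ℝ) ^ (-2:ℝ)) (q+1)).mpr
      (Real.summable_nat_rpow.mpr (by norm_num : (-2:ℝ) < -1))
    exact this
  have hR : ∀ s : ℝ, 2 ≤ s →
      ‖∑' i : ℕ, F s (i + (q+1))‖ ≤ C * ((q:ℝ)+1) ^ (2 - s) := by
    intro s hs
    have hterm : ∀ i : ℕ, ‖F s (i + (q+1))‖ ≤
        ((i + (q+1) : ℕ) : ℝ)^(-2:ℝ) * ((q:ℝ)+1)^(2-s) := by
      intro i
      have hm : (0:ℝ) < ((i + (q+1) : ℕ) : ℝ) := by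
        have : 0 < i + (q+1) := by omega
        exact_mod_cast this
      calc ‖F s (i+(q+1))‖ ≤ ((i + (q+1) : ℕ) : ℝ) ^ (-s) := hnorm s (by linarith) _
        _ = ((i + (q+1) : ℕ) : ℝ)^(-2:ℝ) * ((i + (q+1) : ℕ) : ℝ)^(2-s) := by
            rw [← Real.rpow_add hm]; congr 1; ring
        _ ≤ ((i + (q+1) : ℕ) : ℝ)^(-2:ℝ) * ((q:ℝ)+1)^(2-s) := by
            apply mul_le_mul_of_nonneg_left _ (Real.rpow_nonneg hm.le _)
            apply Real.rpow_le_rpow_of_nonpos (by positivity) _ (by linarith)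
            push_cast
            linarith [Nat.cast_nonneg (α := ℝ) i]
    have hsum1 : Summable (fun i : ℕ => ‖F s (i + (q+1))‖) :=
      (summable_nat_add_iff (f := fun m : ℕ => ‖F s m‖) (q+1)).mpr (hsummable s hs).norm
    calc ‖∑' i : ℕ, F s (i+(q+1))‖ ≤ ∑' i : ℕ, ‖F s (i+(q+1))‖ :=
          norm_tsum_le_tsum_norm hsum1
      _ ≤ ∑' i : ℕ, ((i + (q+1) : ℕ) : ℝ)^(-2:ℝ) * ((q:ℝ)+1)^(2-s) :=
          Summable.tsum_le_tsum hterm hsum1 (hCsum.mul_right _)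
      _ = C * ((q:ℝ)+1)^(2-s) := by rw [tsum_mul_right]
  -- |F s q| = q^(-s)
  have habs_Fq : ∀ s : ℝ, ‖F s q‖ = (q:ℝ) ^ (-s) := by
    intro s
    rw [hFdef]
    simp only [norm_div, hcpow s q (by omega), if_pos (le_of_lt hq)]
    rw [haq1, Real.rpow_neg hq0.le, inv_eq_one_div]
  -- key inequality
  have hkey : ∀ s : ℝ, 2 ≤ s →
      |(q:ℝ)^s * ‖S s‖ - 1| ≤ C * ((q:ℝ)+1)^(2:ℝ) * ((q:ℝ)/((q:ℝ)+1))^s := by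
    intro s hs
    have hqs : (0:ℝ) < (q:ℝ)^s := Real.rpow_pos_of_pos hq0 s
    have h5 : |‖S s‖ - ‖F s q‖| ≤ ‖S s - F s q‖ := abs_norm_sub_norm_le _ _
    have h6 : S s - F s q = ∑' i : ℕ, F s (i+(q+1)) := by rw [hS_eq s hs]; ring
    have hq1 : (0:ℝ) < (q:ℝ)+1 := by linarith
    have hq1s : ((q:ℝ)+1)^s ≠ 0 := ne_of_gt (Real.rpow_pos_of_pos hq1 s)
    calc |(q:ℝ)^s * ‖S s‖ - 1|
        = (q:ℝ)^s * |‖S s‖ - ‖F s q‖| := by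
          conv_rhs => rw [← abs_of_pos hqs, ← abs_mul]
          congr 1
          rw [mul_sub, habs_Fq s, ← Real.rpow_add hq0, add_neg_cancel, Real.rpow_zero]
      _ ≤ (q:ℝ)^s * ‖∑' i : ℕ, F s (i+(q+1))‖ := by
          rw [← h6]; exact mul_le_mul_of_nonneg_left h5 hqs.le
      _ ≤ (q:ℝ)^s * (C * ((q:ℝ)+1)^(2-s)) := mul_le_mul_of_nonneg_left (hR s hs) hqs.le
      _ = C * ((q:ℝ)+1)^(2:ℝ) * ((q:ℝ)/((q:ℝ)+1))^s := by
          rw [Real.rpow_sub hq1, Real.div_rpow hq0.le hq1.le]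
          field_simp
  have hRHS0 : Tendsto (fun s : ℝ => C * ((q:ℝ)+1)^(2:ℝ) * ((q:ℝ)/((q:ℝ)+1))^s)
      atTop (nhds 0) := by
    have hlt : (q:ℝ)/((q:ℝ)+1) < 1 := by
      rw [div_lt_one (by linarith)]; linarith
    have h0 := tendsto_rpow_atTop_of_base_lt_one ((q:ℝ)/((q:ℝ)+1))
      (lt_trans (by norm_num : (-1:ℝ) < 0) (by positivity)) hlt
    simpa using h0.const_mul (C * ((q:ℝ)+1)^(2:ℝ))
  have h1 : Tendsto (fun s : ℝ => (q:ℝ)^s * ‖S s‖) atTop (nhds 1) := by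
    have h0 : Tendsto (fun s : ℝ => (q:ℝ)^s * ‖S s‖ - 1) atTop (nhds 0) := by
      apply squeeze_zero_norm' _ hRHS0
      filter_upwards [eventually_ge_atTop (2:ℝ)] with s hs
      rw [Real.norm_eq_abs]
      exact hkey s hs
    have := h0.add_const 1
    simpa using this
  have hev : ∀ᶠ s : ℝ in atTop, (1/2 : ℝ) < (q:ℝ)^s * ‖S s‖ :=
    h1.eventually (eventually_gt_nhds (by norm_num))
  have h2 : Tendsto (fun s : ℝ => Real.log ((q:ℝ)^s * ‖S s‖)) atTop (nhds 0) := by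
    have := (Real.continuousAt_log (by norm_num : (1:ℝ) ≠ 0)).tendsto.comp h1
    simpa [Function.comp_def] using this
  have h3 : Tendsto (fun s : ℝ => (1/s) * Real.log ((q:ℝ)^s * ‖S s‖)) atTop (nhds 0) := by
    simpa [one_div] using Tendsto.mul (tendsto_inv_atTop_zero (𝕜 := ℝ)) h2
  have h4 : Tendsto (fun s : ℝ =>
      Real.exp (Real.log (q:ℝ) - (1/s) * Real.log ((q:ℝ)^s * ‖S s‖)))
      atTop (nhds (q:ℝ)) := by
    have h5 : Tendsto (fun s : ℝ => Real.log (q:ℝ) - (1/s) * Real.log ((q:ℝ)^s * ‖S s‖))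
        atTop (nhds (Real.log (q:ℝ) - 0)) := tendsto_const_nhds.sub h3
    have h6 := (Real.continuous_exp.tendsto _).comp h5
    simpa [Real.exp_log hq0, Function.comp_def] using h6
  apply h4.congr'
  filter_upwards [hev, eventually_gt_atTop (0:ℝ)] with s hs hs0
  have hqs : (0:ℝ) < (q:ℝ)^s := Real.rpow_pos_of_pos hq0 s
  have hSpos : 0 < ‖S s‖ := by nlinarith
  rw [Real.rpow_def_of_pos hSpos, Real.log_mul (ne_of_gt hqs) (ne_of_gt hSpos),
    Real.log_rpow hq0]
  congr 1
  field_simp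
  ring
end

section
/- Let p₁ < ... < pₙ be the first n primes and pₙ₊₁ the next prime. Define E_n(s) = |pₙ₊₁ − [∑_{j=1}^{2pₙ−1} j^{−s} − ∏_{k=1}^n (1 − p_k^{−s})^{−1}]^{−1/s}| for real s large. Then E_n(s) → 0 as s → ∞, and moreover E_n(s) decays exponentially: there exist constants a > 0 and C such that E_n(s) ≤ C e^{−as} for all sufficiently large s. -/
open Filter

private lemma log_abs_helper : ∀ t : ℝ, 1/2 ≤ t → |Real.log t| ≤ 2 * |t - 1| := by
  intro t ht
  have ht0 : (0:ℝ) < t := by linarith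
  rcases le_or_gt 1 t with h | h
  · rw [abs_of_nonneg (Real.log_nonneg h), abs_of_nonneg (by linarith)]
    have := Real.log_le_sub_one_of_pos ht0
    linarith
  · rw [abs_of_nonpos (Real.log_nonpos ht0.le h.le), abs_of_neg (by linarith)]
    have h1 : Real.log t⁻¹ ≤ t⁻¹ - 1 := Real.log_le_sub_one_of_pos (by positivity)
    rw [Real.log_inv] at h1
    have h3 : t * t⁻¹ = 1 := mul_inv_cancel₀ ht0.ne'
    have h4 : (0:ℝ) ≤ (2*t - 1) * (1 - t) :=
      mul_nonneg (by linarith) (by linarith)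
    -- show t⁻¹ - 1 ≤ 2 * (1 - t)
    have h5 : t⁻¹ - 1 ≤ 2 * (1 - t) := by nlinarith [h3, h4, ht0]
    linarith

set_option maxHeartbeats 1000000 in
/-- E_n(s) = |pₙ₊₁ − [∑_{j=1}^{2pₙ−1} j^{−s} − ∏_{k=1}^n (1 − p_k^{−s})⁻¹]^{−1/s}|
tends to 0 as s → ∞, and decays exponentially: E_n(s) ≤ C e^{−as} eventually. -/
theorem stmt_13 (n : ℕ) (hn : 1 ≤ n) (E : ℝ → ℝ)
    (hE : ∀ s : ℝ, E s = |(Nat.nth Nat.Prime n : ℝ) -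
      ((∑ j ∈ Finset.Icc 1 (2 * Nat.nth Nat.Prime (n - 1) - 1), (j : ℝ) ^ (-s)) -
        ∏ i ∈ Finset.range n, (1 - (Nat.nth Nat.Prime i : ℝ) ^ (-s))⁻¹) ^ (-1 / s)|) :
    Tendsto E atTop (nhds 0) ∧
      ∃ a > (0 : ℝ), ∃ C : ℝ, ∀ᶠ s : ℝ in atTop, E s ≤ C * Real.exp (-a * s) := by
  have hinf : (setOf Nat.Prime).Infinite := Nat.infinite_setOf_prime
  set q := Nat.nth Nat.Prime (n-1) with hqdef
  set P := Nat.nth Nat.Prime n with hPdef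
  have hqprime : q.Prime := Nat.prime_nth_prime (n-1)
  have hPprime : P.Prime := Nat.prime_nth_prime n
  have hq2 : 2 ≤ q := hqprime.two_le
  have hP2 : 2 ≤ P := hPprime.two_le
  have hqP : q < P := (Nat.nth_lt_nth hinf).mpr (by omega)
  -- Bertrand's postulate: P ≤ 2q - 1
  have hP2q : P ≤ 2*q - 1 := by
    obtain ⟨p, hp, hqp, hp2q⟩ := Nat.bertrand q (by omega)
    have h1 : Nat.count Nat.Prime (q+1) = n := by
      rw [Nat.count_succ]
      have : Nat.count Nat.Prime q = n - 1 := Nat.count_nth_of_infinite hinf (n-1)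
      simp only [this, if_pos hqprime]
      omega
    have hcount : n ≤ Nat.count Nat.Prime p := by
      rw [← h1]; exact Nat.count_monotone _ (by omega)
    have hPp : P ≤ p := by
      have := (Nat.nth_le_nth hinf).mpr hcount
      rwa [Nat.nth_count hp] at this
    have hpne : p ≠ 2*q := by
      intro h
      have h2 : (2:ℕ) ∣ p := ⟨q, h⟩
      rcases (Nat.Prime.eq_one_or_self_of_dvd hp 2 h2) with h' | h' <;> omega
    omega
  set M := 2*q with hMdef
  have hM0 : 0 < M := by omega
  have hPM : P + 1 ≤ M := by omega
  have Ppos : (0:ℝ) < (P:ℝ) := by exact_mod_cast hPprime.pos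
  have Mpos : (0:ℝ) < (M:ℝ) := by exact_mod_cast hM0
  -- constants
  set C₀ : ℝ := ∑' m : ℕ, (m:ℝ)^(-2:ℝ) with hC₀def
  have hC₀0 : 0 ≤ C₀ := tsum_nonneg (fun m => by positivity)
  set K : ℝ := (M:ℝ) + C₀ * (M:ℝ)^(2:ℝ) with hKdef
  have hK0 : 0 ≤ K :=
    add_nonneg Mpos.le (mul_nonneg hC₀0 (Real.rpow_nonneg Mpos.le _))
  -- main quantitative estimate
  have hmain : ∀ s : ℝ, 2 ≤ s →
      |((∑ j ∈ Finset.Icc 1 (2*q - 1), (j : ℝ) ^ (-s)) -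
        ∏ i ∈ Finset.range n, (1 - (Nat.nth Nat.Prime i : ℝ) ^ (-s))⁻¹) - (P:ℝ)^(-s)|
        ≤ K * ((P:ℝ)+1)^(-s) := by
    intro s hs
    have hs0 : (0:ℝ) < s := by linarith
    have hssum : Summable (fun m : ℕ => (m:ℝ)^(-s)) :=
      Real.summable_nat_rpow.mpr (by linarith)
    set fs : ℕ →* ℝ :=
      { toFun := fun m : ℕ => (m:ℝ)^(-s),
        map_one' := by simp,
        map_mul' := fun x y => by
          push_cast
          exact Real.mul_rpow (by positivity) (by positivity) } with hfsdef
    have hfsum : Summable ⇑fs := hssum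
    have himg : P.primesBelow = (Finset.range n).image (Nat.nth Nat.Prime) := by
      ext p
      simp only [Nat.mem_primesBelow, Finset.mem_image, Finset.mem_range]
      constructor
      · rintro ⟨hlt, hp⟩
        refine ⟨Nat.count Nat.Prime p, ?_, Nat.nth_count hp⟩
        by_contra hcon
        push_neg at hcon
        have h2 := (Nat.nth_le_nth hinf).mpr hcon
        rw [Nat.nth_count hp] at h2
        omega
      · rintro ⟨i, hi, rfl⟩
        exact ⟨(Nat.nth_lt_nth hinf).mpr hi, Nat.prime_nth_prime i⟩
    have hprod : (∏ i ∈ Finset.range n, (1 - (Nat.nth Nat.Prime i : ℝ) ^ (-s))⁻¹)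
        = ∑' m : P.smoothNumbers, ((m : ℕ):ℝ)^(-s) := by
      have h1 := EulerProduct.prod_primesBelow_geometric_eq_tsum_smoothNumbers hfsum P
      rw [himg, Finset.prod_image (fun i _ j _ h => Nat.nth_injective hinf h)] at h1
      exact h1
    set gg : ℕ → ℝ := Set.indicator P.smoothNumbers (fun m : ℕ => (m:ℝ)^(-s)) with hggdef
    have hprod2 : (∏ i ∈ Finset.range n, (1 - (Nat.nth Nat.Prime i : ℝ) ^ (-s))⁻¹)
        = ∑' m : ℕ, gg m := by
      rw [hprod]
      exact tsum_subtype P.smoothNumbers (fun m : ℕ => (m:ℝ)^(-s))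
    have hgg0 : ∀ m, 0 ≤ gg m := Set.indicator_nonneg (fun a _ => by positivity)
    have hggle : ∀ m, gg m ≤ (m:ℝ)^(-s) :=
      Set.indicator_le_self' (fun a _ => by positivity)
    have hggsum : Summable gg := Summable.of_nonneg_of_le hgg0 hggle hssum
    have hsplit := Summable.sum_add_tsum_nat_add (f := gg) M hggsum
    -- finite part of smooth sum
    have hfilter : Finset.filter (fun j => j ∈ P.smoothNumbers) (Finset.range M)
        = Finset.filter (fun j => j ∈ P.smoothNumbers) (Finset.Icc 1 (2*q-1)) := by
      ext j
      simp only [Finset.mem_filter, Finset.mem_range, Finset.mem_Icc]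
      constructor
      · rintro ⟨h1, h2⟩
        have hj0 := (Nat.mem_smoothNumbers.mp h2).1
        exact ⟨⟨by omega, by omega⟩, h2⟩
      · rintro ⟨⟨h1, h2⟩, h3⟩
        exact ⟨by omega, h3⟩
    have hfin : ∑ i ∈ Finset.range M, gg i
        = ∑ j ∈ Finset.filter (fun j => j ∈ P.smoothNumbers) (Finset.Icc 1 (2*q-1)),
            (j:ℝ)^(-s) := by
      rw [hggdef]
      rw [Finset.sum_indicator_eq_sum_filter (Finset.range M) (fun _ (j:ℕ) => (j:ℝ)^(-s))
        (fun _ => P.smoothNumbers) (fun i => i)]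
      rw [hfilter]
    have hsum_split : (∑ j ∈ Finset.filter (fun j => j ∈ P.smoothNumbers)
          (Finset.Icc 1 (2*q-1)), (j:ℝ)^(-s))
        + (∑ j ∈ Finset.filter (fun j => ¬ j ∈ P.smoothNumbers)
          (Finset.Icc 1 (2*q-1)), (j:ℝ)^(-s))
        = ∑ j ∈ Finset.Icc 1 (2*q-1), (j:ℝ)^(-s) :=
      Finset.sum_filter_add_sum_filter_not _ _ _
    -- P belongs to the non-smooth part
    have hPns : P ∉ P.smoothNumbers := by
      intro h
      exact lt_irrefl P (Nat.mem_smoothNumbers'.mp h P hPprime dvd_rfl)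
    have hPmem : P ∈ Finset.filter (fun j => ¬ j ∈ P.smoothNumbers) (Finset.Icc 1 (2*q-1)) :=
      Finset.mem_filter.mpr ⟨Finset.mem_Icc.mpr ⟨by omega, hP2q⟩, hPns⟩
    have hSns := (Finset.add_sum_erase _ (fun j : ℕ => (j:ℝ)^(-s)) hPmem).symm
    set R : ℝ := ∑ j ∈ (Finset.filter (fun j => ¬ j ∈ P.smoothNumbers)
        (Finset.Icc 1 (2*q-1))).erase P, (j:ℝ)^(-s) with hRdef
    have hR0 : 0 ≤ R := Finset.sum_nonneg (fun j _ => by positivity)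
    have hRle : R ≤ (M:ℝ) * ((P:ℝ)+1)^(-s) := by
      have hterm : ∀ j ∈ (Finset.filter (fun j => ¬ j ∈ P.smoothNumbers)
          (Finset.Icc 1 (2*q-1))).erase P, (j:ℝ)^(-s) ≤ ((P:ℝ)+1)^(-s) := by
        intro j hj
        have hjne : j ≠ P := Finset.ne_of_mem_erase hj
        have hjmem := Finset.mem_of_mem_erase hj
        have hj1 : j ∈ Finset.Icc 1 (2*q-1) := (Finset.mem_filter.mp hjmem).1
        have hjns : j ∉ P.smoothNumbers := (Finset.mem_filter.mp hjmem).2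
        rw [Nat.mem_smoothNumbers'] at hjns
        push_neg at hjns
        obtain ⟨p, hp, hpd, hple⟩ := hjns
        have hj0 : 0 < j := by have := Finset.mem_Icc.mp hj1; omega
        have hpj : p ≤ j := Nat.le_of_dvd hj0 hpd
        have hPj : P + 1 ≤ j := by omega
        have hPjR : ((P:ℝ)+1) ≤ (j:ℝ) := by exact_mod_cast hPj
        exact Real.rpow_le_rpow_of_nonpos (by positivity) hPjR (by linarith)
      have hcard : ((Finset.filter (fun j => ¬ j ∈ P.smoothNumbers)
          (Finset.Icc 1 (2*q-1))).erase P).card ≤ M := by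
        calc ((Finset.filter (fun j => ¬ j ∈ P.smoothNumbers)
              (Finset.Icc 1 (2*q-1))).erase P).card
            ≤ (Finset.filter (fun j => ¬ j ∈ P.smoothNumbers)
              (Finset.Icc 1 (2*q-1))).card := Finset.card_erase_le
          _ ≤ (Finset.Icc 1 (2*q-1)).card := Finset.card_filter_le _ _
          _ = 2*q - 1 + 1 - 1 := Nat.card_Icc 1 (2*q-1)
          _ ≤ M := by omega
      calc R ≤ ((Finset.filter (fun j => ¬ j ∈ P.smoothNumbers)
            (Finset.Icc 1 (2*q-1))).erase P).card • ((P:ℝ)+1)^(-s) :=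
          Finset.sum_le_card_nsmul _ _ _ hterm
        _ = (((Finset.filter (fun j => ¬ j ∈ P.smoothNumbers)
            (Finset.Icc 1 (2*q-1))).erase P).card : ℝ) * ((P:ℝ)+1)^(-s) :=
          nsmul_eq_mul _ _
        _ ≤ (M:ℝ) * ((P:ℝ)+1)^(-s) := by
          apply mul_le_mul_of_nonneg_right _ (by positivity)
          exact_mod_cast hcard
    -- tail bound
    set Tail : ℝ := ∑' i : ℕ, gg (i + M) with hTaildef
    have hTail0 : 0 ≤ Tail := tsum_nonneg (fun i => hgg0 _)
    have h2sum : Summable (fun m : ℕ => (m:ℝ)^(-2:ℝ)) :=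
      Real.summable_nat_rpow.mpr (by norm_num)
    have hshift2 : Summable (fun i : ℕ => ((i + M : ℕ):ℝ)^(-2:ℝ)) :=
      (summable_nat_add_iff M).mpr h2sum
    have hshiftg : Summable (fun i : ℕ => gg (i + M)) :=
      (summable_nat_add_iff M).mpr hggsum
    have hptw : ∀ i : ℕ, gg (i + M) ≤ (M:ℝ)^((2:ℝ)-s) * ((i + M : ℕ):ℝ)^(-2:ℝ) := by
      intro i
      have hx0 : (0:ℝ) < ((i + M : ℕ):ℝ) := by exact_mod_cast (by omega : 0 < i + M)
      have hMx : (M:ℝ) ≤ ((i + M : ℕ):ℝ) := by exact_mod_cast (by omega : M ≤ i + M)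
      calc gg (i + M) ≤ ((i + M : ℕ):ℝ)^(-s) := hggle _
        _ = ((i + M : ℕ):ℝ)^((2:ℝ)-s) * ((i + M : ℕ):ℝ)^(-2:ℝ) := by
            rw [← Real.rpow_add hx0]; congr 1; ring
        _ ≤ (M:ℝ)^((2:ℝ)-s) * ((i + M : ℕ):ℝ)^(-2:ℝ) :=
            mul_le_mul_of_nonneg_right
              (Real.rpow_le_rpow_of_nonpos Mpos hMx (by linarith)) (by positivity)
    have hTailB : Tail ≤ C₀ * (M:ℝ)^(2:ℝ) * ((P:ℝ)+1)^(-s) := by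
      have step1 : Tail ≤ (M:ℝ)^((2:ℝ)-s) * C₀ := by
        calc Tail ≤ ∑' i : ℕ, (M:ℝ)^((2:ℝ)-s) * ((i + M : ℕ):ℝ)^(-2:ℝ) :=
            Summable.tsum_le_tsum hptw hshiftg (hshift2.mul_left _)
          _ = (M:ℝ)^((2:ℝ)-s) * ∑' i : ℕ, ((i + M : ℕ):ℝ)^(-2:ℝ) := tsum_mul_left
          _ ≤ (M:ℝ)^((2:ℝ)-s) * C₀ := by
            apply mul_le_mul_of_nonneg_left _ (Real.rpow_nonneg Mpos.le _)
            have hsp := Summable.sum_add_tsum_nat_add (f := fun m : ℕ => (m:ℝ)^(-2:ℝ)) M h2sum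
            have hpos : 0 ≤ ∑ i ∈ Finset.range M, ((i:ℕ):ℝ)^(-2:ℝ) :=
              Finset.sum_nonneg fun i _ => by positivity
            rw [hC₀def]
            push_cast at hsp ⊢
            linarith
      have hM2 : (M:ℝ)^((2:ℝ)-s) = (M:ℝ)^(2:ℝ) * (M:ℝ)^(-s) := by
        rw [show ((2:ℝ) - s) = 2 + (-s) from by ring, Real.rpow_add Mpos]
      have hP1M : ((P:ℝ)+1) ≤ (M:ℝ) := by exact_mod_cast hPM
      have hMP : (M:ℝ)^(-s) ≤ ((P:ℝ)+1)^(-s) :=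
        Real.rpow_le_rpow_of_nonpos (by positivity) hP1M (by linarith)
      calc Tail ≤ (M:ℝ)^((2:ℝ)-s) * C₀ := step1
        _ = C₀ * (M:ℝ)^(2:ℝ) * (M:ℝ)^(-s) := by rw [hM2]; ring
        _ ≤ C₀ * (M:ℝ)^(2:ℝ) * ((P:ℝ)+1)^(-s) := by
            exact mul_le_mul_of_nonneg_left hMP
              (mul_nonneg hC₀0 (Real.rpow_nonneg Mpos.le _))
    -- assemble
    have hkey : ((∑ j ∈ Finset.Icc 1 (2*q - 1), (j : ℝ) ^ (-s)) -
        ∏ i ∈ Finset.range n, (1 - (Nat.nth Nat.Prime i : ℝ) ^ (-s))⁻¹) - (P:ℝ)^(-s)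
        = R - Tail := by
      rw [hprod2, ← hsplit, hfin, ← hsum_split, hSns]
      ring
    rw [hkey, abs_le]
    have hdist : K * ((P:ℝ)+1)^(-s)
        = (M:ℝ) * ((P:ℝ)+1)^(-s) + C₀ * (M:ℝ)^(2:ℝ) * ((P:ℝ)+1)^(-s) := by
      rw [hKdef]; ring
    have hnn1 : 0 ≤ (M:ℝ) * ((P:ℝ)+1)^(-s) := by positivity
    have hnn2 : 0 ≤ C₀ * (M:ℝ)^(2:ℝ) * ((P:ℝ)+1)^(-s) :=
      mul_nonneg (mul_nonneg hC₀0 (Real.rpow_nonneg Mpos.le _))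
        (Real.rpow_nonneg (by positivity) _)
    constructor <;> linarith
  -- exponential rate
  set θ : ℝ := (P:ℝ) / ((P:ℝ)+1) with hθdef
  have hθ0 : 0 < θ := by positivity
  have hθ1 : θ < 1 := by rw [hθdef, div_lt_one (by positivity)]; linarith
  set a : ℝ := Real.log (((P:ℝ)+1) / (P:ℝ)) with hadef
  have ha : 0 < a := Real.log_pos ((one_lt_div Ppos).mpr (by linarith))
  have hlogθ : Real.log θ = -a := by
    rw [hθdef, hadef, Real.log_div Ppos.ne' (by positivity), Real.log_div (by positivity) Ppos.ne']
    ring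
  have hθexp : ∀ s : ℝ, θ ^ s = Real.exp (-a * s) := by
    intro s
    rw [Real.rpow_def_of_pos hθ0, hlogθ]
  have htendK : Tendsto (fun s : ℝ => K * θ ^ s) atTop (nhds 0) := by
    have h0 : Tendsto (fun s : ℝ => a * s) atTop atTop :=
      Filter.Tendsto.const_mul_atTop ha tendsto_id
    have h1 : Tendsto (fun s : ℝ => -a * s) atTop atBot := by
      have h := tendsto_neg_atTop_atBot.comp h0
      have he : (Neg.neg ∘ fun s : ℝ => a * s) = fun s : ℝ => -a * s := by
        funext s; simp [neg_mul]
      rwa [he] at h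
    have h2 : Tendsto (fun s : ℝ => Real.exp (-a * s)) atTop (nhds 0) :=
      Real.tendsto_exp_atBot.comp h1
    have h3 := h2.const_mul K
    simp only [mul_zero] at h3
    simpa only [hθexp] using h3
  set C : ℝ := 4 * (P:ℝ) * K with hCdef
  -- eventual bound
  have hbound : ∀ᶠ s : ℝ in atTop, E s ≤ C * Real.exp (-a * s) := by
    filter_upwards [eventually_ge_atTop (2:ℝ),
      htendK.eventually_lt_const (by norm_num : (0:ℝ) < 1/2)] with s hs2 hsK
    have hs0 : (0:ℝ) < s := by linarith
    have h1 := hmain s hs2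
    rw [hE s]
    set x : ℝ := (∑ j ∈ Finset.Icc 1 (2*q - 1), (j : ℝ) ^ (-s)) -
      ∏ i ∈ Finset.range n, (1 - (Nat.nth Nat.Prime i : ℝ) ^ (-s))⁻¹ with hxdef
    have hPs : (0:ℝ) < (P:ℝ)^s := Real.rpow_pos_of_pos Ppos s
    set t : ℝ := x * (P:ℝ)^s with htdef
    have hts : |t - 1| ≤ K * θ ^ s := by
      have e1 : t - 1 = (x - (P:ℝ)^(-s)) * (P:ℝ)^s := by
        rw [htdef, Real.rpow_neg Ppos.le]
        field_simp
      rw [e1, abs_mul, abs_of_pos hPs]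
      calc |x - (P:ℝ)^(-s)| * (P:ℝ)^s ≤ (K * ((P:ℝ)+1)^(-s)) * (P:ℝ)^s :=
          mul_le_mul_of_nonneg_right h1 hPs.le
        _ = K * θ ^ s := by
          rw [hθdef, Real.div_rpow Ppos.le (by positivity),
            Real.rpow_neg (by positivity : (0:ℝ) ≤ (P:ℝ)+1)]
          field_simp
    have hthalf : |t - 1| ≤ 1/2 := le_trans hts hsK.le
    obtain ⟨htl, htu⟩ := abs_le.mp hthalf
    have ht1 : 1/2 ≤ t := by linarith
    have htpos : 0 < t := by linarith
    have hxpos : 0 < x := by nlinarith [hPs]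
    have hxt : x = t * (P:ℝ)^(-s) := by
      rw [htdef, Real.rpow_neg Ppos.le]
      field_simp
    have hrw : x ^ (-1/s) = (P:ℝ) * Real.exp (-(Real.log t / s)) := by
      rw [Real.rpow_def_of_pos hxpos, hxt, Real.log_mul htpos.ne' (by positivity),
        Real.log_rpow Ppos]
      rw [show (Real.log t + -s * Real.log (P:ℝ)) * (-1/s)
          = Real.log (P:ℝ) + -(Real.log t / s) by field_simp; ring]
      rw [Real.exp_add, Real.exp_log Ppos]
    rw [hrw]
    have hloget : |Real.log t| ≤ 2 * |t - 1| := log_abs_helper t ht1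
    have hu1 : |Real.log t / s| ≤ 2 * |t - 1| := by
      rw [abs_div, abs_of_pos hs0]
      calc |Real.log t| / s ≤ |Real.log t| := div_le_self (abs_nonneg _) (by linarith)
        _ ≤ 2 * |t - 1| := hloget
    have huabs : |-(Real.log t / s)| ≤ 1 := by
      rw [abs_neg]
      linarith
    have hexp := Real.abs_exp_sub_one_le huabs
    rw [abs_neg] at hexp
    have h4 : |Real.exp (-(Real.log t / s)) - 1| ≤ 4 * (K * θ ^ s) := by
      calc |Real.exp (-(Real.log t / s)) - 1| ≤ 2 * |Real.log t / s| := hexp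
        _ ≤ 2 * (2 * |t - 1|) := by linarith
        _ ≤ 4 * (K * θ ^ s) := by linarith
    have hre : |(P:ℝ) - (P:ℝ) * Real.exp (-(Real.log t / s))|
        = (P:ℝ) * |Real.exp (-(Real.log t / s)) - 1| := by
      rw [show (P:ℝ) - (P:ℝ) * Real.exp (-(Real.log t / s))
          = (P:ℝ) * (1 - Real.exp (-(Real.log t / s))) by ring,
        abs_mul, abs_of_pos Ppos, abs_sub_comm]
    rw [hre]
    calc (P:ℝ) * |Real.exp (-(Real.log t / s)) - 1| ≤ (P:ℝ) * (4 * (K * θ ^ s)) :=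
        mul_le_mul_of_nonneg_left h4 Ppos.le
      _ = C * Real.exp (-a * s) := by rw [hθexp s, hCdef]; ring
  constructor
  · apply squeeze_zero' (Eventually.of_forall (fun s => by rw [hE s]; positivity)) hbound
    have h0 : Tendsto (fun s : ℝ => a * s) atTop atTop :=
      Filter.Tendsto.const_mul_atTop ha tendsto_id
    have h1 : Tendsto (fun s : ℝ => -a * s) atTop atBot := by
      have h := tendsto_neg_atTop_atBot.comp h0
      have he : (Neg.neg ∘ fun s : ℝ => a * s) = fun s : ℝ => -a * s := by
        funext s; simp [neg_mul]
      rwa [he] at h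
    have h2 : Tendsto (fun s : ℝ => Real.exp (-a * s)) atTop (nhds 0) :=
      Real.tendsto_exp_atBot.comp h1
    have h3 := h2.const_mul C
    simpa using h3
  · exact ⟨a, ha, C, hbound⟩
end

section
/- For real s > 1 and the first n primes p₁ < ... < pₙ, the tail product ∏_{j>n} (1 − χ(p_j)/p_j^s)^{−1} (over all primes beyond the n-th) converges and satisfies ∏_{j>n} (1 − χ(p_j)/p_j^s)^{−1} − 1 − χ(pₙ₊₁)/pₙ₊₁^s = O(q^{−s}) as s → ∞ for some real q > pₙ₊₁. -/
set_option maxHeartbeats 1000000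


open Filter Complex Asymptotics

private lemma tail_master (u : ℕ → ℂ) (hu : ∀ i, ‖u i‖ ≤ 1) (b : ℕ → ℕ)
    (hb2 : ∀ i, 2 ≤ b i) (hb01 : b 0 ≤ b 1) (hbg : ∀ i, b 1 + i ≤ b (1 + i)) :
    (∀ s : ℝ, 1 < s → Multipliable (fun i : ℕ => (1 - u i / (b i : ℂ) ^ (s : ℂ))⁻¹)) ∧
    (fun s : ℝ => (∏' i : ℕ, (1 - u i / (b i : ℂ) ^ (s : ℂ))⁻¹) - 1 - u 0 / (b 0 : ℂ) ^ (s : ℂ))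
      =O[atTop] (fun s : ℝ => (min ((b 0 : ℝ) ^ (2:ℝ)) (b 1 : ℝ)) ^ (-s)) := by
  have hb1' : ∀ i, i + 1 ≤ b i := by
    intro i
    cases i with
    | zero => exact le_trans (by norm_num) (hb2 0)
    | succ i =>
      have h1 := hbg i
      have h2 := hb2 1
      have h3 : b (1 + i) = b (i + 1) := by rw [Nat.add_comm]
      omega
  -- norm of a_i
  have hA : ∀ (s : ℝ), 0 < s → ∀ i, ‖u i / (b i : ℂ) ^ (s : ℂ)‖ ≤ (b i : ℝ) ^ (-s) := by
    intro s hs i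
    rw [norm_div, Complex.norm_natCast_cpow_of_pos (by have := hb2 i; omega), Complex.ofReal_re,
      Real.rpow_neg (by positivity), div_eq_mul_inv]
    have hp : (0:ℝ) < (b i : ℝ) ^ s := Real.rpow_pos_of_pos (by have := hb2 i; positivity) _
    calc ‖u i‖ * ((b i : ℝ) ^ s)⁻¹ ≤ 1 * ((b i : ℝ) ^ s)⁻¹ := by gcongr; exact hu i
    _ = ((b i : ℝ) ^ s)⁻¹ := one_mul _
  have hhalf : ∀ (s : ℝ), 1 ≤ s → ∀ i, (b i : ℝ) ^ (-s) ≤ 1/2 := by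
    intro s hs i
    calc (b i : ℝ) ^ (-s) ≤ (2 : ℝ) ^ (-s) :=
          Real.rpow_le_rpow_of_nonpos (by norm_num) (by exact_mod_cast hb2 i) (by linarith)
    _ ≤ (2 : ℝ) ^ (-1 : ℝ) := Real.rpow_le_rpow_of_exponent_le (by norm_num) (by linarith)
    _ = 1/2 := by rw [Real.rpow_neg_one]; norm_num
  have hAhalf : ∀ (s : ℝ), 1 ≤ s → ∀ i, ‖u i / (b i : ℂ) ^ (s : ℂ)‖ ≤ 1/2 :=
    fun s hs i => le_trans (hA s (by linarith) i) (hhalf s hs i)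
  have hne : ∀ (s : ℝ), 1 ≤ s → ∀ i, (1 : ℂ) - u i / (b i : ℂ) ^ (s : ℂ) ≠ 0 := by
    intro s hs i h
    have h1 : (1:ℂ) = u i / (b i : ℂ) ^ (s : ℂ) := by linear_combination h
    have := hAhalf s hs i
    rw [← h1] at this; norm_num at this
  have hgb : ∀ (s : ℝ), 1 ≤ s → ∀ i,
      ‖Complex.log (1 - u i / (b i : ℂ) ^ (s : ℂ))⁻¹‖ ≤ (3/2) * (b i : ℝ) ^ (-s) := by
    intro s hs i
    set z := u i / (b i : ℂ) ^ (s : ℂ) with hz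
    have h12 : ‖z‖ ≤ 1/2 := hAhalf s hs i
    have h1 : ‖z‖ < 1 := by linarith
    have h2 : (1 - ‖z‖)⁻¹ ≤ 2 := by
      rw [inv_le_comm₀ (by linarith) (by norm_num)]; linarith
    have key : ‖Complex.log (1 - z)⁻¹‖ ≤ (3/2) * ‖z‖ := by
      calc ‖Complex.log (1 - z)⁻¹‖ ≤ ‖Complex.log (1 - z)⁻¹ - z‖ + ‖z‖ := by
            simpa using norm_add_le (Complex.log (1-z)⁻¹ - z) z
      _ ≤ ‖z‖ ^ 2 * (1 - ‖z‖)⁻¹ / 2 + ‖z‖ := by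
            gcongr; exact Complex.norm_log_one_sub_inv_sub_self_le h1
      _ ≤ (3/2) * ‖z‖ := by nlinarith [norm_nonneg z, sq_nonneg ‖z‖]
    calc ‖Complex.log (1 - z)⁻¹‖ ≤ (3/2) * ‖z‖ := key
    _ ≤ (3/2) * (b i : ℝ) ^ (-s) := by
          have := hA s (by linarith) i; rw [← hz] at this; linarith
  -- summability
  have hsumb : ∀ t : ℝ, 1 < t → Summable (fun i : ℕ => (b i : ℝ) ^ (-t)) := by
    intro t ht
    have h0 : Summable (fun i : ℕ => ((i : ℝ) + 1) ^ (-t)) := by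
      have := (Real.summable_nat_rpow_inv (p := t)).mpr ht
      have h1 := (summable_nat_add_iff 1).mpr this
      refine h1.congr fun i => ?_
      rw [Real.rpow_neg (by positivity)]
      push_cast
      ring_nf
    refine h0.of_nonneg_of_le (fun i => by positivity) fun i => ?_
    exact Real.rpow_le_rpow_of_nonpos (by positivity) (by exact_mod_cast hb1' i) (by linarith)
  have hgnorm : ∀ s : ℝ, 1 < s →
      Summable (fun i : ℕ => ‖Complex.log (1 - u i / (b i : ℂ) ^ (s : ℂ))⁻¹‖) := by
    intro s hs
    exact ((hsumb s hs).mul_left (3/2)).of_nonneg_of_le (fun i => norm_nonneg _)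
      (fun i => hgb s hs.le i)
  have hsumg : ∀ s : ℝ, 1 < s →
      Summable (fun i : ℕ => Complex.log (1 - u i / (b i : ℂ) ^ (s : ℂ))⁻¹) :=
    fun s hs => Summable.of_norm (hgnorm s hs)
  have hprod : ∀ s : ℝ, 1 < s →
      HasProd (fun i : ℕ => (1 - u i / (b i : ℂ) ^ (s : ℂ))⁻¹)
        (Complex.exp (∑' i : ℕ, Complex.log (1 - u i / (b i : ℂ) ^ (s : ℂ))⁻¹)) := by
    intro s hs
    have h := (hsumg s hs).hasSum.cexp
    have hfe : (Complex.exp ∘ fun i : ℕ => Complex.log (1 - u i / (b i : ℂ) ^ (s : ℂ))⁻¹) =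
        fun i : ℕ => (1 - u i / (b i : ℂ) ^ (s : ℂ))⁻¹ :=
      funext fun i => Complex.exp_log (inv_ne_zero (hne s hs.le i))
    exact hfe ▸ h
  refine ⟨fun s hs => ⟨_, hprod s hs⟩, ?_⟩
  -- Big-O part
  set K : ℝ := ∑' i : ℕ, ((i : ℝ) + 1) ^ (-2 : ℝ) with hKdef
  have hKsum : Summable (fun i : ℕ => ((i : ℝ) + 1) ^ (-2 : ℝ)) := by
    have := (Real.summable_nat_rpow_inv (p := (2:ℝ))).mpr (by norm_num)
    have h1 := (summable_nat_add_iff 1).mpr this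
    refine h1.congr fun i => ?_
    rw [Real.rpow_neg (by positivity)]
    push_cast
    ring_nf
  have hK0 : 0 ≤ K := tsum_nonneg fun i => by positivity
  have hM2 : (2 : ℝ) ≤ (b 1 : ℝ) := by exact_mod_cast hb2 1
  have hP2 : (2 : ℝ) ≤ (b 0 : ℝ) := by exact_mod_cast hb2 0
  have hPM : (b 0 : ℝ) ≤ (b 1 : ℝ) := by exact_mod_cast hb01
  set M2 : ℝ := (b 1 : ℝ) ^ (2:ℝ) with hM2def
  have hM2pos : 0 < M2 := Real.rpow_pos_of_pos (by linarith) _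
  -- tail sum bound
  have htail : ∀ s : ℝ, 2 ≤ s →
      ∑' i : ℕ, (b (i + 1) : ℝ) ^ (-s) ≤ K * (M2 * (b 1 : ℝ) ^ (-s)) := by
    intro s hs
    have key : ∀ i : ℕ, (b (i + 1) : ℝ) ^ (-s) ≤
        ((i : ℝ) + 1) ^ (-2 : ℝ) * (M2 * (b 1 : ℝ) ^ (-s)) := by
      intro i
      have hx : (b 1 : ℝ) + (i : ℝ) ≤ (b (i + 1) : ℝ) := by
        have := hbg i; rw [add_comm 1 i] at this; exact_mod_cast this
      have hxpos : (0 : ℝ) < (b 1 : ℝ) + i := by positivity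
      have h1 : (b (i + 1) : ℝ) ^ (-s) ≤ ((b 1 : ℝ) + (i:ℝ)) ^ (-s) :=
        Real.rpow_le_rpow_of_nonpos hxpos hx (by linarith)
      have h2 : ((b 1 : ℝ) + (i:ℝ)) ^ (-s) =
          ((b 1 : ℝ) + (i:ℝ)) ^ (-2 : ℝ) * ((b 1 : ℝ) + (i:ℝ)) ^ (2 - s) := by
        rw [← Real.rpow_add hxpos]; ring_nf
      have h3 : ((b 1 : ℝ) + (i:ℝ)) ^ (-2 : ℝ) ≤ ((i : ℝ) + 1) ^ (-2 : ℝ) :=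
        Real.rpow_le_rpow_of_nonpos (by positivity) (by linarith) (by norm_num)
      have h4 : ((b 1 : ℝ) + (i:ℝ)) ^ (2 - s) ≤ (b 1 : ℝ) ^ (2 - s) :=
        Real.rpow_le_rpow_of_nonpos (by linarith) (by linarith) (by linarith)
      have h5 : (b 1 : ℝ) ^ (2 - s) = M2 * (b 1 : ℝ) ^ (-s) := by
        rw [hM2def, ← Real.rpow_add (by linarith)]; ring_nf
      calc (b (i + 1) : ℝ) ^ (-s)
          ≤ ((b 1 : ℝ) + (i:ℝ)) ^ (-2 : ℝ) * ((b 1 : ℝ) + (i:ℝ)) ^ (2 - s) := h2 ▸ h1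
      _ ≤ ((i : ℝ) + 1) ^ (-2 : ℝ) * (M2 * (b 1 : ℝ) ^ (-s)) := by
            rw [← h5]
            exact mul_le_mul h3 h4 (by positivity) (by positivity)
    have hsum1 : Summable (fun i : ℕ => (b (i + 1) : ℝ) ^ (-s)) :=
      (summable_nat_add_iff 1).mpr (hsumb s (by linarith))
    have hsum2 : Summable (fun i : ℕ => ((i : ℝ) + 1) ^ (-2 : ℝ) * (M2 * (b 1:ℝ) ^ (-s))) :=
      hKsum.mul_right _
    calc ∑' i : ℕ, (b (i + 1) : ℝ) ^ (-s)
        ≤ ∑' i : ℕ, ((i : ℝ) + 1) ^ (-2 : ℝ) * (M2 * (b 1:ℝ) ^ (-s)) :=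
          Summable.tsum_le_tsum key hsum1 hsum2
    _ = K * (M2 * (b 1:ℝ) ^ (-s)) := by rw [tsum_mul_right]
  set C2 : ℝ := (3/2) * (1 + K * M2) with hC2def
  have hC2pos : 0 < C2 := by positivity
  rw [isBigO_iff]
  refine ⟨C2^2 + 1 + (3/2) * (K * M2), ?_⟩
  have hev2 : ∀ᶠ s : ℝ in atTop, C2 * (b 0 : ℝ) ^ (-s) ≤ 1 := by
    have hbase : Tendsto (fun s : ℝ => ((b 0 : ℝ)⁻¹) ^ s) atTop (nhds 0) :=
      tendsto_rpow_atTop_of_base_lt_one _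
        (by
          have h : (0:ℝ) < ((b 0 : ℕ):ℝ)⁻¹ := by positivity
          linarith)
        (by rw [inv_lt_one_iff₀]; right; linarith)
    have hb0 : Tendsto (fun s : ℝ => (b 0 : ℝ) ^ (-s)) atTop (nhds 0) := by
      refine hbase.congr fun s => ?_
      rw [Real.inv_rpow (by linarith), ← Real.rpow_neg (by linarith)]
    have h := (tendsto_const_nhds (x := C2)).mul hb0
    rw [mul_zero] at h
    exact h.eventually_le_const (by norm_num)
  filter_upwards [eventually_ge_atTop (2:ℝ), hev2] with s hs2 hsmall
  have hs1 : (1:ℝ) < s := by linarith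
  set g : ℕ → ℂ := fun i => Complex.log (1 - u i / (b i : ℂ) ^ (s : ℂ))⁻¹ with hgdef
  set T : ℂ := ∑' i : ℕ, g i with hTdef
  have hP : (∏' i : ℕ, (1 - u i / (b i : ℂ) ^ (s : ℂ))⁻¹) = Complex.exp T :=
    (hprod s hs1).tprod_eq
  have hsg : Summable g := hsumg s hs1
  have hTsplit : T = g 0 + ∑' i : ℕ, g (i + 1) := Summable.tsum_eq_zero_add hsg
  have hgnorms : Summable (fun i : ℕ => ‖g i‖) := hgnorm s hs1
  -- tail estimate
  have htail_norm : ‖∑' i : ℕ, g (i + 1)‖ ≤ (3/2) * (K * (M2 * (b 1 : ℝ) ^ (-s))) := by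
    have h1 : Summable (fun i : ℕ => ‖g (i + 1)‖) := (summable_nat_add_iff 1).mpr hgnorms
    calc ‖∑' i : ℕ, g (i + 1)‖ ≤ ∑' i : ℕ, ‖g (i + 1)‖ := norm_tsum_le_tsum_norm h1
    _ ≤ ∑' i : ℕ, (3/2) * (b (i + 1) : ℝ) ^ (-s) := by
          refine Summable.tsum_le_tsum (fun i => hgb s hs1.le (i + 1)) h1 ?_
          exact ((summable_nat_add_iff 1).mpr (hsumb s hs1)).mul_left _
    _ = (3/2) * ∑' i : ℕ, (b (i + 1) : ℝ) ^ (-s) := tsum_mul_left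
    _ ≤ (3/2) * (K * (M2 * (b 1 : ℝ) ^ (-s))) := by
          have := htail s hs2; linarith
  have hMP : (b 1 : ℝ) ^ (-s) ≤ (b 0 : ℝ) ^ (-s) :=
    Real.rpow_le_rpow_of_nonpos (by linarith) hPM (by linarith)
  have hT_norm : ‖T‖ ≤ C2 * (b 0 : ℝ) ^ (-s) := by
    have hsplit : ∑' i : ℕ, (b i : ℝ) ^ (-s) =
        (b 0 : ℝ) ^ (-s) + ∑' i : ℕ, (b (i + 1) : ℝ) ^ (-s) := Summable.tsum_eq_zero_add (hsumb s hs1)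
    have h2 : ∑' i : ℕ, (b i : ℝ) ^ (-s) ≤ (1 + K * M2) * (b 0 : ℝ) ^ (-s) := by
      have h3 := htail s hs2
      have h4 : K * (M2 * (b 1 : ℝ) ^ (-s)) ≤ K * M2 * (b 0 : ℝ) ^ (-s) := by
        rw [mul_assoc K M2]
        exact mul_le_mul_of_nonneg_left (mul_le_mul_of_nonneg_left hMP (le_of_lt hM2pos)) hK0
      rw [hsplit]; nlinarith
    calc ‖T‖ ≤ ∑' i : ℕ, ‖g i‖ := norm_tsum_le_tsum_norm hgnorms
    _ ≤ ∑' i : ℕ, (3/2) * (b i : ℝ) ^ (-s) := by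
          exact Summable.tsum_le_tsum (fun i => hgb s hs1.le i) hgnorms ((hsumb s hs1).mul_left _)
    _ = (3/2) * ∑' i : ℕ, (b i : ℝ) ^ (-s) := tsum_mul_left
    _ ≤ (3/2) * ((1 + K * M2) * (b 0 : ℝ) ^ (-s)) := by
          have hp : (0:ℝ) ≤ (3/2:ℝ) := by norm_num
          exact mul_le_mul_of_nonneg_left h2 hp
    _ = C2 * (b 0 : ℝ) ^ (-s) := by rw [hC2def]; ring
  have hT1 : ‖T‖ ≤ 1 := le_trans hT_norm hsmall
  have hexp : ‖Complex.exp T - 1 - T‖ ≤ ‖T‖ ^ 2 := by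
    have := Complex.norm_exp_sub_one_sub_id_le (x := T) hT1
    exact this
  have hg0 : ‖g 0 - u 0 / (b 0 : ℂ) ^ (s : ℂ)‖ ≤ ((b 0 : ℝ) ^ (-s)) ^ 2 := by
    set z := u 0 / (b 0 : ℂ) ^ (s : ℂ) with hzdef
    have h12 : ‖z‖ ≤ 1/2 := hAhalf s hs1.le 0
    have h1 : ‖z‖ < 1 := by linarith
    have h2 : (1 - ‖z‖)⁻¹ ≤ 2 := by
      rw [inv_le_comm₀ (by linarith) (by norm_num)]; linarith
    have key := Complex.norm_log_one_sub_inv_sub_self_le h1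
    have h3 : ‖z‖ ≤ (b 0 : ℝ) ^ (-s) := hA s (by linarith) 0
    have h4 : ‖g 0 - z‖ ≤ ‖z‖ ^ 2 := by
      calc ‖g 0 - z‖ ≤ ‖z‖ ^ 2 * (1 - ‖z‖)⁻¹ / 2 := key
      _ ≤ ‖z‖ ^ 2 := by nlinarith [sq_nonneg ‖z‖]
    calc ‖g 0 - z‖ ≤ ‖z‖ ^ 2 := h4
    _ ≤ ((b 0 : ℝ) ^ (-s)) ^ 2 := by nlinarith [norm_nonneg z]
  -- put it together
  have hdecomp : Complex.exp T - 1 - u 0 / (b 0 : ℂ) ^ (s : ℂ) =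
      (Complex.exp T - 1 - T) + (g 0 - u 0 / (b 0 : ℂ) ^ (s : ℂ)) + ∑' i : ℕ, g (i + 1) := by
    rw [hTsplit]; ring
  set q : ℝ := min ((b 0 : ℝ) ^ (2:ℝ)) (b 1 : ℝ) with hqdef
  have hqpos : 0 < q := lt_min (by positivity) (by linarith)
  have hq1 : ((b 0 : ℝ) ^ (2:ℝ)) ^ (-s) ≤ q ^ (-s) :=
    Real.rpow_le_rpow_of_nonpos hqpos (min_le_left _ _) (by linarith)
  have hq2 : (b 1 : ℝ) ^ (-s) ≤ q ^ (-s) :=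
    Real.rpow_le_rpow_of_nonpos hqpos (min_le_right _ _) (by linarith)
  have hsq : ((b 0 : ℝ) ^ (-s)) ^ 2 = ((b 0 : ℝ) ^ (2:ℝ)) ^ (-s) := by
    rw [← Real.rpow_natCast ((b 0 : ℝ) ^ (-s)) 2, ← Real.rpow_mul (by linarith),
      ← Real.rpow_mul (by linarith)]
    norm_num
    ring_nf
  have hnormq : ‖q ^ (-s)‖ = q ^ (-s) := by
    rw [Real.norm_eq_abs, abs_of_pos (Real.rpow_pos_of_pos hqpos _)]
  rw [hP, hdecomp, hnormq]
  have hqs0 : 0 ≤ q ^ (-s) := le_of_lt (Real.rpow_pos_of_pos hqpos _)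
  calc ‖(Complex.exp T - 1 - T) + (g 0 - u 0 / (b 0 : ℂ) ^ (s : ℂ)) + ∑' i : ℕ, g (i + 1)‖
      ≤ ‖Complex.exp T - 1 - T‖ + ‖g 0 - u 0 / (b 0 : ℂ) ^ (s : ℂ)‖ + ‖∑' i : ℕ, g (i + 1)‖ :=
        norm_add₃_le
  _ ≤ ‖T‖ ^ 2 + ((b 0 : ℝ) ^ (-s)) ^ 2 + (3/2) * (K * (M2 * (b 1 : ℝ) ^ (-s))) := by
        gcongr
  _ ≤ (C2 * (b 0 : ℝ) ^ (-s)) ^ 2 + ((b 0 : ℝ) ^ (-s)) ^ 2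
        + (3/2) * (K * M2) * (b 1 : ℝ) ^ (-s) := by
        have h1 : ‖T‖ ^ 2 ≤ (C2 * (b 0 : ℝ) ^ (-s)) ^ 2 := by
          have := norm_nonneg T
          nlinarith [hT_norm]
        nlinarith []
  _ = (C2 ^ 2 + 1) * ((b 0 : ℝ) ^ (2:ℝ)) ^ (-s) + (3/2) * (K * M2) * (b 1 : ℝ) ^ (-s) := by
        rw [← hsq]; ring
  _ ≤ (C2 ^ 2 + 1) * q ^ (-s) + (3/2) * (K * M2) * q ^ (-s) := by
        have h1 : 0 ≤ C2 ^ 2 + 1 := by positivity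
        have h2 : 0 ≤ (3:ℝ)/2 * (K * M2) := by positivity
        nlinarith [hq1, hq2]
  _ = (C2 ^ 2 + 1 + (3/2) * (K * M2)) * q ^ (-s) := by ring

private def tailEquiv (n : ℕ) : ℕ ≃ {j : ℕ // n ≤ j} where
  toFun i := ⟨n + i, Nat.le_add_right n i⟩
  invFun j := j.1 - n
  left_inv i := by simp
  right_inv j := by
    ext
    simp [Nat.add_sub_cancel' j.2]

/-- For s > 1 the tail Euler product ∏_{j>n} (1 − χ(p_j)/p_j^s)⁻¹ converges
(is multipliable), and ∏_{j>n} (1 − χ(p_j)/p_j^s)⁻¹ − 1 − χ(pₙ₊₁)/pₙ₊₁^s = O(q^{−s})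
as s → ∞ for some real q > pₙ₊₁. -/
theorem stmt_14 (k : ℕ) (χ : DirichletCharacter ℂ k) (n : ℕ) :
    (∀ s : ℝ, 1 < s → Multipliable (fun j : {j : ℕ // n ≤ j} =>
      (1 - χ ((Nat.nth Nat.Prime (j : ℕ) : ℕ) : ZMod k) /
        (Nat.nth Nat.Prime (j : ℕ) : ℂ) ^ (s : ℂ))⁻¹)) ∧
    ∃ q : ℝ, (Nat.nth Nat.Prime n : ℝ) < q ∧
      (fun s : ℝ =>
          (∏' j : {j : ℕ // n ≤ j},
            (1 - χ ((Nat.nth Nat.Prime (j : ℕ) : ℕ) : ZMod k) /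
              (Nat.nth Nat.Prime (j : ℕ) : ℂ) ^ (s : ℂ))⁻¹) - 1 -
            χ ((Nat.nth Nat.Prime n : ℕ) : ZMod k) /
              ((Nat.nth Nat.Prime n : ℕ) : ℂ) ^ (s : ℂ)) =O[atTop]
        (fun s : ℝ => q ^ (-s)) := by
  have hnth_lt : ∀ {m l : ℕ}, m < l → Nat.nth Nat.Prime m < Nat.nth Nat.Prime l :=
    fun h => (Nat.nth_lt_nth Nat.infinite_setOf_prime).mpr h
  have hnth_add : ∀ m i : ℕ, Nat.nth Nat.Prime m + i ≤ Nat.nth Nat.Prime (m + i) := by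
    intro m i
    induction i with
    | zero => simp
    | succ i ih =>
      have h := hnth_lt (show m + i < m + (i + 1) by omega)
      omega
  have h2 : ∀ i : ℕ, 2 ≤ Nat.nth Nat.Prime i := fun i => (Nat.prime_nth_prime i).two_le
  have hmaster := tail_master
    (fun i => χ ((Nat.nth Nat.Prime (n + i) : ℕ) : ZMod k))
    (fun i => DirichletCharacter.norm_le_one χ _)
    (fun i => Nat.nth Nat.Prime (n + i))
    (fun i => h2 (n + i))
    (le_of_lt (hnth_lt (by omega)))
    (fun i => by
      show Nat.nth Nat.Prime (n + 1) + i ≤ Nat.nth Nat.Prime (n + (1 + i))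
      have heq : n + (1 + i) = n + 1 + i := by omega
      rw [heq]
      exact hnth_add (n + 1) i)
  obtain ⟨hmult, hbigO⟩ := hmaster
  constructor
  · intro s hs
    have := hmult s hs
    exact (tailEquiv n).multipliable_iff.mp this
  · refine ⟨min ((Nat.nth Nat.Prime n : ℝ) ^ (2:ℝ)) (Nat.nth Nat.Prime (n + 1) : ℝ), ?_, ?_⟩
    · refine lt_min ?_ ?_
      · have hx : (2:ℝ) ≤ (Nat.nth Nat.Prime n : ℝ) := by exact_mod_cast h2 n
        have : ((Nat.nth Nat.Prime n : ℝ)) ^ (2:ℝ) = (Nat.nth Nat.Prime n : ℝ) *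
            (Nat.nth Nat.Prime n : ℝ) := by
          rw [show ((2:ℝ)) = ((2:ℕ):ℝ) by norm_num, Real.rpow_natCast]; ring
        rw [this]; nlinarith
      · exact_mod_cast hnth_lt (Nat.lt_succ_self n)
    · have heq : (fun s : ℝ =>
          (∏' j : {j : ℕ // n ≤ j},
            (1 - χ ((Nat.nth Nat.Prime (j : ℕ) : ℕ) : ZMod k) /
              (Nat.nth Nat.Prime (j : ℕ) : ℂ) ^ (s : ℂ))⁻¹) - 1 -
            χ ((Nat.nth Nat.Prime n : ℕ) : ZMod k) /
              ((Nat.nth Nat.Prime n : ℕ) : ℂ) ^ (s : ℂ)) =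
          (fun s : ℝ =>
          (∏' i : ℕ, (1 - χ ((Nat.nth Nat.Prime (n + i) : ℕ) : ZMod k) /
              (Nat.nth Nat.Prime (n + i) : ℂ) ^ (s : ℂ))⁻¹) - 1 -
            χ ((Nat.nth Nat.Prime (n + 0) : ℕ) : ZMod k) /
              ((Nat.nth Nat.Prime (n + 0) : ℂ)) ^ (s : ℂ)) := by
        funext s
        congr 1
        congr 1
        exact ((tailEquiv n).tprod_eq _).symm
      rw [heq]
      exact hbigO
end
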